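/- arXiv:1807.08933 — 2 statements merged into one kernel-verified Lean document; each statement's English description precedes it below -/
import Mathlib

section
/- If G is a 4-connected plane triangulation, then for every vertex v of G, the set of neighbours N(v) induces a cycle in G. -/
/-- A combinatorial plane triangulation: a simple graph together with its set of
triangular faces, each edge on exactly two faces, satisfying Euler's formula. -/
structure PlaneTriangulation (V : Type*) [Fintype V] [DecidableEq V] where
  G : SimpleGraph V
  faces : Finset (Finset V)
  face_card : ∀ f ∈ faces, f.card = 3
  face_clique : ∀ f ∈ faces, ∀ a ∈ f, ∀ b ∈ f, a ≠ b → G.Adj a b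
  edge_two_faces : ∀ a b : V, G.Adj a b → (faces.filter (fun f => a ∈ f ∧ b ∈ f)).card = 2
  euler : (Fintype.card V : ℤ) - (G.edgeSet.ncard : ℤ) + (faces.card : ℤ) = 2

/-- The degree of a vertex. -/
noncomputable def PlaneTriangulation.deg {V : Type*} [Fintype V] [DecidableEq V]
    (T : PlaneTriangulation V) (v : V) : ℕ := (T.G.neighborSet v).ncard

/-- Membership in the family `E(4)`, witnessed by a proper `3`-colouring
`{B, W, R}` in which every red vertex has degree `4`. -/
def PlaneTriangulation.IsE4Coloring {V : Type*} [Fintype V] [DecidableEq V]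
    (T : PlaneTriangulation V) (B W R : Set V) : Prop :=
  B ∪ W ∪ R = Set.univ ∧ Disjoint B W ∧ Disjoint B R ∧ Disjoint W R ∧
  (∀ a ∈ B, ∀ b ∈ B, ¬ T.G.Adj a b) ∧
  (∀ a ∈ W, ∀ b ∈ W, ¬ T.G.Adj a b) ∧
  (∀ a ∈ R, ∀ b ∈ R, ¬ T.G.Adj a b) ∧
  (∀ v ∈ R, T.deg v = 4)

def FourConnected {V : Type*} [Fintype V] (G : SimpleGraph V) : Prop :=
  5 ≤ Fintype.card V ∧ ∀ S : Set V, S.ncard ≤ 3 → (G.induce Sᶜ).Connected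

/-- A graph is a cycle graph: connected and 2-regular (on a nonempty vertex set). -/
def IsCycleGraph {α : Type*} (H : SimpleGraph α) : Prop :=
  Nonempty α ∧ H.Connected ∧ ∀ u : α, (H.neighborSet u).ncard = 2


open Finset

noncomputable section AuxTri
open scoped Classical

variable {α : Type*} [DecidableEq α]

/-- Edges (as unordered pairs) of a family of faces. -/
def edgesOf (FF : Finset (Finset α)) : Finset (Sym2 α) :=
  FF.biUnion (fun f => f.sym2.filter (fun e => ¬ e.IsDiag))

/-- Vertices of a family of faces. -/
def vertsOf (FF : Finset (Finset α)) : Finset α := FF.biUnion id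

/-- Two faces are adjacent in the dual graph if they share (at least) two vertices. -/
def Dadj (FF : Finset (Finset α)) (f g : Finset α) : Prop :=
  f ∈ FF ∧ g ∈ FF ∧ f ≠ g ∧ ∃ a b : α, a ≠ b ∧ a ∈ f ∧ a ∈ g ∧ b ∈ f ∧ b ∈ g

def DReach (FF : Finset (Finset α)) : Finset α → Finset α → Prop :=
  Relation.ReflTransGen (Dadj FF)

/-- A triangulated complex: faces are triangles and every edge is in exactly two faces. -/
def IsTri (FF : Finset (Finset α)) : Prop :=
  (∀ f ∈ FF, f.card = 3) ∧
  (∀ a b : α, a ≠ b → (∃ f ∈ FF, a ∈ f ∧ b ∈ f) →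
    (FF.filter (fun f => a ∈ f ∧ b ∈ f)).card = 2)

lemma mem_edgesOf {FF : Finset (Finset α)} {e : Sym2 α} :
    e ∈ edgesOf FF ↔ ∃ f ∈ FF, e ∈ f.sym2 ∧ ¬ e.IsDiag := by
  simp [edgesOf, and_comm]

lemma mem_vertsOf {FF : Finset (Finset α)} {a : α} :
    a ∈ vertsOf FF ↔ ∃ f ∈ FF, a ∈ f := by
  simp [vertsOf]

lemma edge_mk_mem {FF : Finset (Finset α)} {f : Finset α} (hf : f ∈ FF)
    {a b : α} (ha : a ∈ f) (hb : b ∈ f) (hab : a ≠ b) : s(a, b) ∈ edgesOf FF := by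
  refine mem_edgesOf.2 ⟨f, hf, ?_, ?_⟩
  · exact Finset.mk_mem_sym2_iff.2 ⟨ha, hb⟩
  · simpa using hab

lemma endpoint_mem_vertsOf {FF : Finset (Finset α)} {e : Sym2 α} (he : e ∈ edgesOf FF)
    {a : α} (ha : a ∈ e) : a ∈ vertsOf FF := by
  obtain ⟨f, hf, hef, -⟩ := mem_edgesOf.1 he
  exact mem_vertsOf.2 ⟨f, hf, Finset.mem_sym2_iff.1 hef a ha⟩

lemma two_faces {FF : Finset (Finset α)} (hT : IsTri FF) {e : Sym2 α} (he : e ∈ edgesOf FF) :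
    (FF.filter (fun f => e ∈ f.sym2)).card = 2 := by
  obtain ⟨f, hf, hef, hd⟩ := mem_edgesOf.1 he
  induction e with
  | _ a b =>
    have hab : a ≠ b := by simpa using hd
    have hmem := Finset.mk_mem_sym2_iff.1 hef
    have h2 := hT.2 a b hab ⟨f, hf, hmem.1, hmem.2⟩
    have : (FF.filter (fun f => s(a,b) ∈ f.sym2)) = FF.filter (fun f => a ∈ f ∧ b ∈ f) := by
      apply Finset.filter_congr
      intro g _
      simp [Finset.mk_mem_sym2_iff]
    rw [this]; exact h2

/-- the filter of faces containing an edge, as an explicit pair -/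
lemma two_faces_pair {FF : Finset (Finset α)} (hT : IsTri FF) {e : Sym2 α}
    (he : e ∈ edgesOf FF) {f₁ f₂ : Finset α} (h₁ : f₁ ∈ FF) (h₂ : f₂ ∈ FF)
    (hne : f₁ ≠ f₂) (he₁ : e ∈ f₁.sym2) (he₂ : e ∈ f₂.sym2) :
    FF.filter (fun f => e ∈ f.sym2) = {f₁, f₂} := by
  have hsub : ({f₁, f₂} : Finset (Finset α)) ⊆ FF.filter (fun f => e ∈ f.sym2) := by
    intro g hg
    rcases Finset.mem_insert.1 hg with rfl | hg
    · exact Finset.mem_filter.2 ⟨h₁, he₁⟩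
    · rw [Finset.mem_singleton.1 hg]; exact Finset.mem_filter.2 ⟨h₂, he₂⟩
  refine (Finset.eq_of_subset_of_card_le hsub ?_).symm
  rw [two_faces hT he]
  exact le_of_eq (Finset.card_pair hne).symm

variable [Fintype α]

def delMap (FF : Finset (Finset α)) :
    (↥(edgesOf FF) → ZMod 2) →ₗ[ZMod 2] (↥(vertsOf FF) → ZMod 2) where
  toFun y := fun w => ∑ e : ↥(edgesOf FF), if (w : α) ∈ (e : Sym2 α) then y e else 0
  map_add' y z := by
    funext w
    simp only [Pi.add_apply]
    rw [← Finset.sum_add_distrib]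
    exact Finset.sum_congr rfl fun e _ => by split <;> simp
  map_smul' c y := by
    funext w
    simp only [Pi.smul_apply, RingHom.id_apply, smul_eq_mul]
    rw [Finset.mul_sum]
    exact Finset.sum_congr rfl fun e _ => by split <;> simp

def phiMap (FF : Finset (Finset α)) :
    (↥FF → ZMod 2) →ₗ[ZMod 2] (↥(edgesOf FF) → ZMod 2) where
  toFun z := fun e => ∑ f : ↥FF, if (e : Sym2 α) ∈ (f : Finset α).sym2 then z f else 0
  map_add' y z := by
    funext e
    simp only [Pi.add_apply]
    rw [← Finset.sum_add_distrib]
    exact Finset.sum_congr rfl fun f _ => by split <;> simp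
  map_smul' c y := by
    funext e
    simp only [Pi.smul_apply, RingHom.id_apply, smul_eq_mul]
    rw [Finset.mul_sum]
    exact Finset.sum_congr rfl fun f _ => by split <;> simp

def sigMap (FF : Finset (Finset α)) :
    (↥(vertsOf FF) → ZMod 2) →ₗ[ZMod 2] ZMod 2 where
  toFun x := ∑ w : ↥(vertsOf FF), x w
  map_add' y z := by simp [Finset.sum_add_distrib]
  map_smul' c y := by simp [Finset.mul_sum]

lemma card_filter_univ_subtype {β : Type*} (s : Finset β) (p : β → Prop) [DecidablePred p] :
    (Finset.univ.filter (fun x : {y // y ∈ s} => p ↑x)).card = (s.filter p).card := by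
  refine Finset.card_bij (fun x _ => (x : β)) ?_ ?_ ?_
  · intro a ha
    simp only [Finset.mem_filter, Finset.mem_univ, true_and] at ha
    exact Finset.mem_filter.2 ⟨a.2, ha⟩
  · intro a _ b _ h; exact Subtype.ext h
  · intro b hb
    simp only [Finset.mem_filter] at hb
    exact ⟨⟨b, hb.1⟩, by simp [hb.2], rfl⟩

lemma sum_subtype_ite {β M : Type*} [AddCommMonoid M] [Fintype β] (p : β → Prop) [DecidablePred p] (c : M) :
    (∑ x : β, if p x then c else 0) = (Finset.univ.filter (fun x : β => p x)).card • c := by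
  rw [← Finset.sum_filter, Finset.sum_const]

lemma count_face_edges_at {FF : Finset (Finset α)} (hT : IsTri FF) {f : Finset α}
    (hf : f ∈ FF) (w : α) :
    ((edgesOf FF).filter (fun e => w ∈ e ∧ e ∈ f.sym2)).card = if w ∈ f then 2 else 0 := by
  by_cases hw : w ∈ f
  · have hcard : (f.erase w).card = 2 := by rw [Finset.card_erase_of_mem hw, hT.1 f hf]
    obtain ⟨a, b, hab, hfe⟩ := Finset.card_eq_two.1 hcard
    have haE : a ∈ f.erase w := by rw [hfe]; simp
    have hbE : b ∈ f.erase w := by rw [hfe]; simp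
    have haf : a ∈ f := Finset.mem_of_mem_erase haE
    have hbf : b ∈ f := Finset.mem_of_mem_erase hbE
    have haw : a ≠ w := Finset.ne_of_mem_erase haE
    have hbw : b ≠ w := Finset.ne_of_mem_erase hbE
    have hset : (edgesOf FF).filter (fun e => w ∈ e ∧ e ∈ f.sym2) = {s(w,a), s(w,b)} := by
      ext e
      induction e with
      | _ x y =>
        simp only [Finset.mem_filter, Finset.mem_insert, Finset.mem_singleton]
        constructor
        · rintro ⟨heE, hwe, hef⟩
          have hxy : x ≠ y := by
            obtain ⟨g, hg, heg, hd⟩ := mem_edgesOf.1 heE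
            simpa using hd
          have hxf : x ∈ f := (Finset.mk_mem_sym2_iff.1 hef).1
          have hyf : y ∈ f := (Finset.mk_mem_sym2_iff.1 hef).2
          rcases Sym2.mem_iff.1 hwe with rfl | rfl
          · have : y ∈ f.erase w := Finset.mem_erase.2 ⟨fun h => hxy h.symm, hyf⟩
            rw [hfe] at this
            rcases Finset.mem_insert.1 this with rfl | h
            · exact Or.inl rfl
            · rw [Finset.mem_singleton.1 h]; exact Or.inr rfl
          · have : x ∈ f.erase w := Finset.mem_erase.2 ⟨hxy, hxf⟩
            rw [hfe] at this
            rcases Finset.mem_insert.1 this with rfl | h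
            · exact Or.inl (Sym2.eq_swap)
            · rw [Finset.mem_singleton.1 h]; exact Or.inr (Sym2.eq_swap)
        · rintro (h | h)
          · rw [h]
            exact ⟨edge_mk_mem hf hw haf (Ne.symm haw), by simp, Finset.mk_mem_sym2_iff.2 ⟨hw, haf⟩⟩
          · rw [h]
            exact ⟨edge_mk_mem hf hw hbf (Ne.symm hbw), by simp, Finset.mk_mem_sym2_iff.2 ⟨hw, hbf⟩⟩
    rw [hset, if_pos hw]
    apply Finset.card_pair
    intro h
    rcases (Sym2.mk_eq_mk_iff (p := (w,a)) (q := (w,b))).1 h with h | h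
    · exact hab (congrArg Prod.snd h)
    · have h1 : w = b := congrArg Prod.fst h
      have h2 : a = w := congrArg Prod.snd h
      exact hab (h2.trans h1)
  · rw [if_neg hw]
    rw [Finset.card_eq_zero, Finset.filter_eq_empty_iff]
    rintro e - ⟨hwe, hef⟩
    exact hw (Finset.mem_sym2_iff.1 hef w hwe)

lemma count_edge_ends {FF : Finset (Finset α)} {e : Sym2 α} (he : e ∈ edgesOf FF) :
    ((vertsOf FF).filter (fun a => a ∈ e)).card = 2 := by
  induction e with
  | _ x y =>
    have hxy : x ≠ y := by
      obtain ⟨g, hg, heg, hd⟩ := mem_edgesOf.1 he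
      simpa using hd
    have hset : (vertsOf FF).filter (fun a => a ∈ s(x,y)) = {x, y} := by
      ext c
      simp only [Finset.mem_filter, Finset.mem_insert, Finset.mem_singleton, Sym2.mem_iff]
      constructor
      · rintro ⟨-, h⟩; exact h
      · rintro (rfl | rfl)
        · exact ⟨endpoint_mem_vertsOf he (by simp), Or.inl rfl⟩
        · exact ⟨endpoint_mem_vertsOf he (by simp), Or.inr rfl⟩
    rw [hset]
    exact Finset.card_pair hxy

lemma zmod2_add_self (x : ZMod 2) : x + x = 0 := by
  fin_cases x <;> decide

lemma zmod2_two_nsmul (x : ZMod 2) : (2:ℕ) • x = 0 := by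
  rw [two_nsmul]; exact zmod2_add_self x

lemma del_comp_phi {FF : Finset (Finset α)} (hT : IsTri FF) :
    (delMap FF).comp (phiMap FF) = 0 := by
  apply LinearMap.ext; intro z
  funext w
  show (∑ e : ↥(edgesOf FF), if (w:α) ∈ (e:Sym2 α) then
      (∑ f : ↥FF, if (e:Sym2 α) ∈ (f:Finset α).sym2 then z f else 0) else 0) = 0
  have step1 : ∀ e : ↥(edgesOf FF),
      (if (w:α) ∈ (e:Sym2 α) then (∑ f : ↥FF, if (e:Sym2 α) ∈ (f:Finset α).sym2 then z f else 0) else 0)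
      = ∑ f : ↥FF, if ((w:α) ∈ (e:Sym2 α) ∧ (e:Sym2 α) ∈ (f:Finset α).sym2) then z f else 0 := by
    intro e
    by_cases hwe : (w:α) ∈ (e:Sym2 α)
    · rw [if_pos hwe]; exact Finset.sum_congr rfl fun f _ => by simp [hwe]
    · rw [if_neg hwe]; symm; apply Finset.sum_eq_zero; intro f _; simp [hwe]
  rw [Finset.sum_congr rfl (fun e _ => step1 e), Finset.sum_comm]
  apply Finset.sum_eq_zero
  intro f _
  rw [sum_subtype_ite (fun e : ↥(edgesOf FF) => (w:α) ∈ (e:Sym2 α) ∧ (e:Sym2 α) ∈ (f:Finset α).sym2) (z f)]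
  rw [card_filter_univ_subtype (edgesOf FF) (fun e => (w:α) ∈ e ∧ e ∈ (f:Finset α).sym2)]
  rw [count_face_edges_at hT f.2 (w:α)]
  by_cases hwf : (w:α) ∈ (f:Finset α)
  · rw [if_pos hwf]; exact zmod2_two_nsmul (z f)
  · rw [if_neg hwf]; simp

lemma sig_comp_del (FF : Finset (Finset α)) : (sigMap FF).comp (delMap FF) = 0 := by
  apply LinearMap.ext; intro y
  show (∑ w : ↥(vertsOf FF), ∑ e : ↥(edgesOf FF), if (w:α) ∈ (e:Sym2 α) then y e else 0) = 0
  rw [Finset.sum_comm]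
  apply Finset.sum_eq_zero
  intro e _
  rw [sum_subtype_ite (fun w : ↥(vertsOf FF) => (w:α) ∈ (e:Sym2 α)) (y e)]
  rw [card_filter_univ_subtype (vertsOf FF) (fun a => a ∈ (e:Sym2 α))]
  rw [count_edge_ends e.2]
  exact zmod2_two_nsmul (y e)

def adjE (FF : Finset (Finset α)) (a b : α) : Prop := a ≠ b ∧ s(a,b) ∈ edgesOf FF

def VReach (FF : Finset (Finset α)) : α → α → Prop := Relation.ReflTransGen (adjE FF)

omit [Fintype α] in
lemma vreach_of_face {FF : Finset (Finset α)} {f : Finset α} (hf : f ∈ FF) {a b : α}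
    (ha : a ∈ f) (hb : b ∈ f) : VReach FF a b := by
  rcases eq_or_ne a b with rfl | hne
  · exact Relation.ReflTransGen.refl
  · exact Relation.ReflTransGen.single ⟨hne, edge_mk_mem hf ha hb hne⟩

omit [Fintype α] in
lemma vreach_of_dreach {FF : Finset (Finset α)} {f g : Finset α} (h : DReach FF f g) :
    ∀ _hf : f ∈ FF, ∀ a ∈ f, ∀ b ∈ g, VReach FF a b := by
  induction h with
  | refl => intro hf a ha b hb; exact vreach_of_face hf ha hb
  | tail hr hadj ih =>
      intro hf a ha b hb
      obtain ⟨hm, hc, hne', x, y, hxy, hx1, hx2, hy1, hy2⟩ := hadj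
      exact Relation.ReflTransGen.trans (ih hf a ha x hx1) (vreach_of_face hc hx2 hb)

omit [Fintype α] in
lemma vreach_all {FF : Finset (Finset α)} (hD : ∀ f ∈ FF, ∀ g ∈ FF, DReach FF f g) {a b : α}
    (ha : a ∈ vertsOf FF) (hb : b ∈ vertsOf FF) : VReach FF a b := by
  obtain ⟨f, hf, haf⟩ := mem_vertsOf.1 ha
  obtain ⟨g, hg, hbg⟩ := mem_vertsOf.1 hb
  exact vreach_of_dreach (hD f hf g hg) hf a haf b hbg

def sgl (FF : Finset (Finset α)) (w : ↥(vertsOf FF)) : ↥(vertsOf FF) → ZMod 2 :=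
  Pi.single w 1

lemma del_single {FF : Finset (Finset α)} {a b : α} (hab : a ≠ b)
    (he : s(a,b) ∈ edgesOf FF) :
    delMap FF (Pi.single (⟨s(a,b), he⟩ : ↥(edgesOf FF)) 1)
      = sgl FF ⟨a, endpoint_mem_vertsOf he (by simp)⟩
        + sgl FF ⟨b, endpoint_mem_vertsOf he (by simp)⟩ := by
  unfold sgl
  funext w
  have hL : delMap FF (Pi.single (⟨s(a,b), he⟩ : ↥(edgesOf FF)) 1) w
      = if (w:α) ∈ s(a,b) then 1 else 0 := by
    show (∑ e' : ↥(edgesOf FF), if (w:α) ∈ (e' : Sym2 α) then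
        Pi.single (⟨s(a,b), he⟩:↥(edgesOf FF)) 1 e' else 0) = _
    rw [Finset.sum_eq_single (⟨s(a,b), he⟩ : ↥(edgesOf FF))]
    · rw [Pi.single_eq_same]
    · intro e' _ hne
      rw [Pi.single_eq_of_ne hne]
      simp
    · intro h; exact absurd (Finset.mem_univ _) h
  rw [hL]
  by_cases hA : (w:α) = a
  · have hnB : ¬ (w:α) = b := fun h => hab (hA.symm.trans h)
    simp [Pi.single_apply, Subtype.ext_iff, Sym2.mem_iff, hA, hnB, hab]
  · by_cases hB : (w:α) = b
    · simp [Pi.single_apply, Subtype.ext_iff, Sym2.mem_iff, hA, hB, Ne.symm hab]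
    · simp [Pi.single_apply, Subtype.ext_iff, Sym2.mem_iff, hA, hB]

lemma pair_mem_range_del {FF : Finset (Finset α)} : ∀ {a b : α} (_h : VReach FF a b)
    (ha : a ∈ vertsOf FF) (hb : b ∈ vertsOf FF),
    sgl FF ⟨a, ha⟩ + sgl FF ⟨b, hb⟩ ∈ LinearMap.range (delMap FF) := by
  intro a b h
  induction h using Relation.ReflTransGen.head_induction_on with
  | refl =>
      intro ha hb
      have h0 : sgl FF ⟨b, ha⟩ + sgl FF ⟨b, hb⟩ = 0 := by
        funext t; exact zmod2_add_self _
      rw [h0]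
      exact Submodule.zero_mem _
  | head hstep hrest ih =>
      intro ha hb
      rename_i a' c
      have hc : c ∈ vertsOf FF := endpoint_mem_vertsOf hstep.2 (by simp)
      have key : sgl FF ⟨a', ha⟩ + sgl FF ⟨b, hb⟩
          = (sgl FF ⟨a', ha⟩ + sgl FF ⟨c, hc⟩) + (sgl FF ⟨c, hc⟩ + sgl FF ⟨b, hb⟩) := by
        funext t
        simp only [Pi.add_apply]
        generalize sgl FF ⟨a', ha⟩ t = u
        generalize sgl FF ⟨c, hc⟩ t = v
        generalize sgl FF ⟨b, hb⟩ t = z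
        rw [show u + v + (v + z) = u + (v + v) + z by ring, zmod2_add_self, add_zero]
      rw [key]
      refine Submodule.add_mem _ ⟨_, del_single hstep.1 hstep.2⟩ (ih hc hb)

lemma phi_eval {FF : Finset (Finset α)} (hT : IsTri FF) (z : ↥FF → ZMod 2) {e : Sym2 α}
    (he : e ∈ edgesOf FF) {f₁ f₂ : Finset α}
    (h₁ : f₁ ∈ FF) (h₂ : f₂ ∈ FF) (hne : f₁ ≠ f₂) (he₁ : e ∈ f₁.sym2) (he₂ : e ∈ f₂.sym2) :
    phiMap FF z ⟨e, he⟩ = z ⟨f₁, h₁⟩ + z ⟨f₂, h₂⟩ := by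
  show (∑ f : ↥FF, if e ∈ (f:Finset α).sym2 then z f else 0) = _
  rw [← Finset.sum_filter]
  have hfil : Finset.univ.filter (fun f : ↥FF => e ∈ (f:Finset α).sym2)
      = {(⟨f₁,h₁⟩ : ↥FF), ⟨f₂,h₂⟩} := by
    ext g
    simp only [Finset.mem_filter, Finset.mem_univ, true_and, Finset.mem_insert,
      Finset.mem_singleton]
    constructor
    · intro hg
      have hmem : (g:Finset α) ∈ FF.filter (fun f => e ∈ f.sym2) := Finset.mem_filter.2 ⟨g.2, hg⟩
      rw [two_faces_pair hT he h₁ h₂ hne he₁ he₂] at hmem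
      rcases Finset.mem_insert.1 hmem with h | h
      · exact Or.inl (Subtype.ext h)
      · exact Or.inr (Subtype.ext (Finset.mem_singleton.1 h))
    · rintro (rfl | rfl)
      · exact he₁
      · exact he₂
  rw [hfil, Finset.sum_pair (by intro h; exact hne (congrArg Subtype.val h))]

def constMap (FF : Finset (Finset α)) : ZMod 2 →ₗ[ZMod 2] (↥FF → ZMod 2) where
  toFun c := fun _ => c
  map_add' := by intros; rfl
  map_smul' := by intros; rfl

lemma zmod2_eq_of_add_eq_zero {x y : ZMod 2} (h : x + y = 0) : y = x := by
  have h2 : x + (x + y) = x + 0 := congrArg (x + ·) h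
  rwa [← add_assoc, zmod2_add_self, zero_add, add_zero] at h2

lemma ker_phi_eq (FF : Finset (Finset α)) (hT : IsTri FF) (hne : FF.Nonempty)
    (hD : ∀ f ∈ FF, ∀ g ∈ FF, DReach FF f g) :
    LinearMap.ker (phiMap FF) = LinearMap.range (constMap FF) := by
  obtain ⟨f₀, hf₀⟩ := hne
  apply le_antisymm
  · intro z hz
    have hz0 : phiMap FF z = 0 := LinearMap.mem_ker.1 hz
    have const_on : ∀ {g h : Finset α} (_ : DReach FF g h) (hg : g ∈ FF) (hh : h ∈ FF),
        z ⟨h, hh⟩ = z ⟨g, hg⟩ := by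
      intro g h hreach
      induction hreach with
      | refl => intro hg hh; rfl
      | tail hr hadj ih =>
          intro hg hh
          obtain ⟨hm, hc, hne', x, y, hxy, hx1, hx2, hy1, hy2⟩ := hadj
          have heq1 := ih hg hm
          have he : s(x,y) ∈ edgesOf FF := edge_mk_mem hm hx1 hy1 hxy
          have hval : phiMap FF z ⟨s(x,y), he⟩ = z ⟨_, hm⟩ + z ⟨_, hc⟩ :=
            phi_eval hT z he hm hc hne' (Finset.mk_mem_sym2_iff.2 ⟨hx1, hy1⟩)
              (Finset.mk_mem_sym2_iff.2 ⟨hx2, hy2⟩)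
          have h0 : z ⟨_, hm⟩ + z ⟨_, hc⟩ = 0 := by
            rw [← hval, hz0]; rfl
          rw [zmod2_eq_of_add_eq_zero h0, heq1]
    refine ⟨z ⟨f₀, hf₀⟩, ?_⟩
    funext f
    show z ⟨f₀, hf₀⟩ = z f
    rw [← const_on (hD f₀ hf₀ f f.2) hf₀ f.2]
  · rintro z ⟨c, rfl⟩
    apply LinearMap.mem_ker.2
    funext e
    show (∑ f : ↥FF, if (e:Sym2 α) ∈ (f:Finset α).sym2 then c else 0) = 0
    rw [sum_subtype_ite (fun f : ↥FF => (e:Sym2 α) ∈ (f:Finset α).sym2) c]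
    rw [card_filter_univ_subtype FF (fun f => (e:Sym2 α) ∈ f.sym2)]
    rw [two_faces hT e.2]
    exact zmod2_two_nsmul c

lemma genus_main (FF : Finset (Finset α)) (hT : IsTri FF) (hne : FF.Nonempty)
    (hD : ∀ f ∈ FF, ∀ g ∈ FF, DReach FF f g) :
    (vertsOf FF).card + FF.card ≤ (edgesOf FF).card + 2 ∧
    ((vertsOf FF).card + FF.card = (edgesOf FF).card + 2 →
      LinearMap.range (phiMap FF) = LinearMap.ker (delMap FF)) := by
  obtain ⟨f₀, hf₀⟩ := hne
  have hWne : (vertsOf FF).Nonempty := by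
    have hpos : 0 < f₀.card := by rw [hT.1 f₀ hf₀]; norm_num
    obtain ⟨a, ha⟩ := Finset.card_pos.1 hpos
    exact ⟨a, mem_vertsOf.2 ⟨f₀, hf₀, ha⟩⟩
  obtain ⟨v₀, hv₀⟩ := hWne
  -- dimension of ker phi
  have hkerphi : LinearMap.ker (phiMap FF) = LinearMap.range (constMap FF) :=
    ker_phi_eq FF hT ⟨f₀, hf₀⟩ hD
  have hconst_inj : Function.Injective (constMap FF) := by
    intro c d h
    exact congrFun h ⟨f₀, hf₀⟩
  have hkerphi_rank : Module.finrank (ZMod 2) (LinearMap.ker (phiMap FF)) = 1 := by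
    rw [hkerphi, LinearMap.finrank_range_of_inj hconst_inj, Module.finrank_self]
  -- rank-nullity for phi
  have eq1 : Module.finrank (ZMod 2) (LinearMap.range (phiMap FF)) + 1 = FF.card := by
    have := LinearMap.finrank_range_add_finrank_ker (phiMap FF)
    rw [hkerphi_rank, Module.finrank_pi, Fintype.card_coe] at this
    exact this
  -- rank-nullity for del
  have eq2 : Module.finrank (ZMod 2) (LinearMap.range (delMap FF))
      + Module.finrank (ZMod 2) (LinearMap.ker (delMap FF)) = (edgesOf FF).card := by
    have := LinearMap.finrank_range_add_finrank_ker (delMap FF)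
    rw [Module.finrank_pi, Fintype.card_coe] at this
    exact this
  -- range del = ker sig
  have hrangedel : LinearMap.range (delMap FF) = LinearMap.ker (sigMap FF) := by
    apply le_antisymm
    · rw [LinearMap.range_le_ker_iff]; exact sig_comp_del FF
    · intro x hx
      have hx0 : (∑ w : ↥(vertsOf FF), x w) = 0 := LinearMap.mem_ker.1 hx
      have hxsum : x = ∑ w : ↥(vertsOf FF), x w • (sgl FF w + sgl FF ⟨v₀,hv₀⟩) := by
        have h1 : ∀ w : ↥(vertsOf FF), x w • (sgl FF w + sgl FF ⟨v₀,hv₀⟩)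
            = Pi.single w (x w) + x w • sgl FF ⟨v₀,hv₀⟩ := by
          intro w
          rw [smul_add]
          congr 1
          funext t
          unfold sgl
          rw [Pi.smul_apply, Pi.single_apply, Pi.single_apply]
          split <;> simp
        rw [Finset.sum_congr rfl (fun w _ => h1 w), Finset.sum_add_distrib,
          Finset.univ_sum_single, ← Finset.sum_smul, hx0, zero_smul, add_zero]
      rw [hxsum]
      apply Submodule.sum_mem
      intro w _
      apply Submodule.smul_mem
      exact pair_mem_range_del (vreach_all hD w.2 hv₀) w.2 hv₀
  -- sigma surjective
  have hsig_surj : Function.Surjective (sigMap FF) := by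
    intro c
    refine ⟨c • sgl FF ⟨v₀,hv₀⟩, ?_⟩
    show (∑ w : ↥(vertsOf FF), (c • sgl FF ⟨v₀,hv₀⟩) w) = c
    have : ∀ w : ↥(vertsOf FF), (c • sgl FF ⟨v₀,hv₀⟩) w
        = if w = ⟨v₀,hv₀⟩ then c else 0 := by
      intro w
      unfold sgl
      rw [Pi.smul_apply, Pi.single_apply]
      split <;> simp
    rw [Finset.sum_congr rfl (fun w _ => this w)]
    rw [Finset.sum_ite_eq' Finset.univ (⟨v₀,hv₀⟩ : ↥(vertsOf FF)) (fun _ => c)]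
    simp
  have eq3 : 1 + Module.finrank (ZMod 2) (LinearMap.ker (sigMap FF)) = (vertsOf FF).card := by
    have := LinearMap.finrank_range_add_finrank_ker (sigMap FF)
    rw [Module.finrank_pi, Fintype.card_coe] at this
    rw [LinearMap.range_eq_top.2 hsig_surj] at this
    rw [finrank_top, Module.finrank_self] at this
    exact this
  have hle : LinearMap.range (phiMap FF) ≤ LinearMap.ker (delMap FF) :=
    LinearMap.range_le_ker_iff.2 (del_comp_phi hT)
  have hfle : Module.finrank (ZMod 2) (LinearMap.range (phiMap FF))
      ≤ Module.finrank (ZMod 2) (LinearMap.ker (delMap FF)) :=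
    Submodule.finrank_mono hle
  have hrdel : Module.finrank (ZMod 2) (LinearMap.range (delMap FF))
      = Module.finrank (ZMod 2) (LinearMap.ker (sigMap FF)) := by rw [hrangedel]
  constructor
  · omega
  · intro heq
    have : Module.finrank (ZMod 2) (LinearMap.ker (delMap FF))
        ≤ Module.finrank (ZMod 2) (LinearMap.range (phiMap FF)) := by omega
    exact (Submodule.eq_of_le_of_finrank_le hle this)

omit [Fintype α] in
lemma dadj_symm {FF : Finset (Finset α)} : Symmetric (Dadj FF) := by
  rintro f g ⟨hf, hg, hne, a, b, hab, h1, h2, h3, h4⟩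
  exact ⟨hg, hf, hne.symm, a, b, hab, h2, h1, h4, h3⟩

omit [Fintype α] in
lemma dreach_symm {FF : Finset (Finset α)} {f g : Finset α} (h : DReach FF f g) :
    DReach FF g f :=
  by
    haveI : Std.Symm (Dadj FF) := ⟨fun a b h => dadj_symm h⟩
    exact Std.Symm.symm (r := Relation.ReflTransGen (Dadj FF)) _ _ h

def classOf (FF : Finset (Finset α)) (f : Finset α) : Finset (Finset α) :=
  FF.filter (fun g => DReach FF f g)

omit [Fintype α] in
lemma mem_classOf {FF : Finset (Finset α)} {f g : Finset α} :
    g ∈ classOf FF f ↔ g ∈ FF ∧ DReach FF f g := Finset.mem_filter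

omit [Fintype α] in
lemma classOf_self {FF : Finset (Finset α)} {f : Finset α} (hf : f ∈ FF) :
    f ∈ classOf FF f := Finset.mem_filter.2 ⟨hf, Relation.ReflTransGen.refl⟩

omit [Fintype α] in
lemma classOf_subset {FF : Finset (Finset α)} {f : Finset α} : classOf FF f ⊆ FF :=
  Finset.filter_subset _ _

omit [Fintype α] in
lemma classOf_eq {FF : Finset (Finset α)} {f g : Finset α} (h : DReach FF f g) :
    classOf FF f = classOf FF g := by
  ext h'
  simp only [mem_classOf]
  constructor
  · rintro ⟨h1, h2⟩; exact ⟨h1, Relation.ReflTransGen.trans (dreach_symm h) h2⟩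
  · rintro ⟨h1, h2⟩; exact ⟨h1, Relation.ReflTransGen.trans h h2⟩

omit [Fintype α] in
lemma class_closed_edge {FF : Finset (Finset α)} {f g : Finset α} (hf : f ∈ FF) (hg : g ∈ FF)
    {a b : α} (hab : a ≠ b) (ha1 : a ∈ f) (hb1 : b ∈ f) (ha2 : a ∈ g) (hb2 : b ∈ g) :
    DReach FF f g := by
  rcases eq_or_ne f g with rfl | hne
  · exact Relation.ReflTransGen.refl
  · exact Relation.ReflTransGen.single ⟨hf, hg, hne, a, b, hab, ha1, ha2, hb1, hb2⟩

omit [Fintype α] in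
lemma dreach_restrict {FF : Finset (Finset α)} {f g : Finset α} (h : DReach FF f g) :
    DReach (classOf FF f) f g := by
  induction h with
  | refl => exact Relation.ReflTransGen.refl
  | @tail m q hr hadj ih =>
      have hmFF : m ∈ FF := hadj.1
      have hqFF : q ∈ FF := hadj.2.1
      have hm : m ∈ classOf FF f := mem_classOf.2 ⟨hmFF, hr⟩
      have hq : q ∈ classOf FF f := mem_classOf.2 ⟨hqFF, Relation.ReflTransGen.tail hr hadj⟩
      exact Relation.ReflTransGen.tail ih ⟨hm, hq, hadj.2.2.1, hadj.2.2.2⟩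

lemma sep_helper {W : Type*} (G : SimpleGraph W) (S A : Set W)
    (hA : ∀ p q : W, p ∈ A → p ∉ S → q ∉ A → q ∉ S → ¬ G.Adj p q)
    (y x : ↥(Sᶜ)) (hx : (x:W) ∈ A) (hy : (y:W) ∉ A) :
    ¬ (G.induce Sᶜ).Reachable x y := by
  intro hr
  obtain ⟨p⟩ := hr
  revert hx
  induction p with
  | nil => intro hx; exact hy hx
  | @cons u v' w' huv p ih =>
      intro hu
      have hadj : G.Adj ↑u ↑v' := huv
      by_cases hv : (v' : W) ∈ A
      · exact ih hy hv
      · exact hA ↑u ↑v' hu u.2 hv v'.2 hadj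

def RotAdj (FF : Finset (Finset α)) (v : α) (f g : Finset α) : Prop :=
  f ∈ FF ∧ g ∈ FF ∧ f ≠ g ∧ v ∈ f ∧ v ∈ g ∧ ∃ u, u ≠ v ∧ u ∈ f ∧ u ∈ g

def RotReach (FF : Finset (Finset α)) (v : α) : Finset α → Finset α → Prop :=
  Relation.ReflTransGen (RotAdj FF v)

omit [Fintype α] in
lemma rotadj_symm {FF : Finset (Finset α)} {v : α} : Symmetric (RotAdj FF v) := by
  rintro f g ⟨hf, hg, hne, hvf, hvg, u, huv, huf, hug⟩
  exact ⟨hg, hf, hne.symm, hvg, hvf, u, huv, hug, huf⟩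

omit [DecidableEq α] [Fintype α] in
lemma zmod2_cases (x : ZMod 2) : x = 0 ∨ x = 1 := by
  fin_cases x
  · exact Or.inl rfl
  · exact Or.inr rfl

end AuxTri

section MainT
open SimpleGraph
open scoped Classical
variable {V : Type*} [Fintype V] [DecidableEq V] (T : PlaneTriangulation V)

lemma tri_isTri : IsTri T.faces := by
  constructor
  · exact T.face_card
  · intro a b hab hex
    obtain ⟨f, hf, ha, hb⟩ := hex
    exact T.edge_two_faces a b (T.face_clique f hf a ha b hb hab)

lemma faces_filter_pair_nonempty {a b : V} (hadj : T.G.Adj a b) :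
    ∃ f ∈ T.faces, a ∈ f ∧ b ∈ f := by
  have h2 := T.edge_two_faces a b hadj
  have hne : (T.faces.filter (fun f => a ∈ f ∧ b ∈ f)).Nonempty := by
    rw [← Finset.card_pos, h2]; norm_num
  obtain ⟨f, hf⟩ := hne
  exact ⟨f, (Finset.mem_filter.1 hf).1, (Finset.mem_filter.1 hf).2⟩

variable (h4 : FourConnected T.G)
include h4

lemma G_connected : T.G.Connected := by
  have h := h4.2 ∅ (by simp)
  rw [Set.compl_empty] at h
  exact (SimpleGraph.induceUnivIso T.G).connected_iff.1 h

lemma exists_adj (v : V) : ∃ u, T.G.Adj v u := by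
  obtain ⟨w, hw⟩ := Fintype.exists_ne_of_one_lt_card (by have := h4.1; omega) v
  obtain ⟨p⟩ := (G_connected T h4).preconnected v w
  cases p with
  | nil => exact absurd rfl hw
  | cons h _ => exact ⟨_, h⟩

lemma exists_face_mem (v : V) : ∃ f ∈ T.faces, v ∈ f := by
  obtain ⟨u, hu⟩ := exists_adj T h4 v
  obtain ⟨f, hf, hv, _⟩ := faces_filter_pair_nonempty T hu
  exact ⟨f, hf, hv⟩

lemma vertsOf_faces_eq : vertsOf T.faces = Finset.univ := by
  ext v
  simp only [Finset.mem_univ, iff_true]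
  exact mem_vertsOf.2 (exists_face_mem T h4 v)

lemma edgesOf_faces_coe : ↑(edgesOf T.faces) = T.G.edgeSet := by
  ext e
  induction e with
  | _ a b =>
    simp only [Finset.mem_coe, SimpleGraph.mem_edgeSet]
    constructor
    · intro he
      obtain ⟨f, hf, hef, hd⟩ := mem_edgesOf.1 he
      have hab : a ≠ b := by simpa using hd
      have hm := Finset.mk_mem_sym2_iff.1 hef
      exact T.face_clique f hf a hm.1 b hm.2 hab
    · intro hadj
      obtain ⟨f, hf, ha, hb⟩ := faces_filter_pair_nonempty T hadj
      exact edge_mk_mem hf ha hb hadj.ne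

lemma euler_nat : (vertsOf T.faces).card + T.faces.card = (edgesOf T.faces).card + 2 := by
  have hv : (vertsOf T.faces).card = Fintype.card V := by
    rw [vertsOf_faces_eq T h4]; exact Finset.card_univ
  have he : T.G.edgeSet.ncard = (edgesOf T.faces).card := by
    rw [← edgesOf_faces_coe T h4, Set.ncard_coe_finset]
  have heuler := T.euler
  rw [he] at heuler
  have hZ : (Fintype.card V : ℤ) + T.faces.card = ((edgesOf T.faces).card : ℤ) + 2 := by
    linarith
  have hN : Fintype.card V + T.faces.card = (edgesOf T.faces).card + 2 := by exact_mod_cast hZ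
  rw [hv]; exact hN

lemma hD_global : ∀ f ∈ T.faces, ∀ g ∈ T.faces, DReach T.faces f g := by
  by_contra hcon
  push_neg at hcon
  obtain ⟨fA, hfA, fB, hfB, hnAB⟩ := hcon
  have hT : IsTri T.faces := tri_isTri T
  set C : Finset (Finset (Finset V)) := T.faces.image (classOf T.faces) with hC
  have hrep : ∀ c ∈ C, ∃ h ∈ T.faces, c = classOf T.faces h := by
    intro c hc; obtain ⟨h, hh, hch⟩ := Finset.mem_image.1 hc; exact ⟨h, hh, hch.symm⟩
  have hclass_of_mem : ∀ {c g}, c ∈ C → g ∈ c → classOf T.faces g = c := by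
    intro c g hc hg
    obtain ⟨h, hh, rfl⟩ := hrep c hc
    exact (classOf_eq (mem_classOf.1 hg).2).symm
  have hCsub : ∀ c ∈ C, c ⊆ T.faces := by
    intro c hc; obtain ⟨h, hh, rfl⟩ := hrep c hc; exact classOf_subset
  have hk2 : ∃ c₁ ∈ C, ∃ c₂ ∈ C, c₁ ≠ c₂ := by
    refine ⟨classOf T.faces fA, Finset.mem_image_of_mem _ hfA,
      classOf T.faces fB, Finset.mem_image_of_mem _ hfB, ?_⟩
    intro h
    apply hnAB
    have : fB ∈ classOf T.faces fA := h ▸ classOf_self hfB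
    exact (mem_classOf.1 this).2
  have hfilter_class : ∀ c ∈ C, ∀ a b : V, a ≠ b → (∃ f ∈ c, a ∈ f ∧ b ∈ f) →
      c.filter (fun f => a ∈ f ∧ b ∈ f) = T.faces.filter (fun f => a ∈ f ∧ b ∈ f) := by
    intro c hc a b hab hex
    obtain ⟨f, hfc, haf, hbf⟩ := hex
    apply Finset.Subset.antisymm
    · exact Finset.filter_subset_filter _ (hCsub c hc)
    · intro g hg
      obtain ⟨hgFF, hag, hbg⟩ := Finset.mem_filter.1 hg
      have hreach : DReach T.faces f g :=
        class_closed_edge (hCsub c hc hfc) hgFF hab haf hbf hag hbg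
      have hmem : g ∈ classOf T.faces f := mem_classOf.2 ⟨hgFF, hreach⟩
      rw [hclass_of_mem hc hfc] at hmem
      exact Finset.mem_filter.2 ⟨hmem, hag, hbg⟩
  have hTri_class : ∀ c ∈ C, IsTri c := by
    intro c hc
    constructor
    · intro f hf; exact hT.1 f (hCsub c hc hf)
    · intro a b hab hex
      rw [hfilter_class c hc a b hab hex]
      obtain ⟨f, hfc, ha, hb⟩ := hex
      exact hT.2 a b hab ⟨f, hCsub c hc hfc, ha, hb⟩
  have hne_class : ∀ c ∈ C, c.Nonempty := by
    intro c hc; obtain ⟨h, hh, rfl⟩ := hrep c hc; exact ⟨h, classOf_self hh⟩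
  have hD_class : ∀ c ∈ C, ∀ f ∈ c, ∀ g ∈ c, DReach c f g := by
    intro c hc f hf g hg
    obtain ⟨h, hh, rfl⟩ := hrep c hc
    have h1 : DReach T.faces f g :=
      Relation.ReflTransGen.trans (dreach_symm (mem_classOf.1 hf).2) (mem_classOf.1 hg).2
    have h2 := dreach_restrict h1
    have h3 : classOf T.faces h = classOf T.faces f := classOf_eq (mem_classOf.1 hf).2
    rwa [h3]
  have hgenus : ∀ c ∈ C, (vertsOf c).card + c.card ≤ (edgesOf c).card + 2 := by
    intro c hc
    exact (genus_main c (hTri_class c hc) (hne_class c hc) (hD_class c hc)).1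
  -- (S1)
  have hS1 : ∑ c ∈ C, c.card = T.faces.card := by
    rw [Finset.card_eq_sum_card_image (classOf T.faces) T.faces]
    apply Finset.sum_congr rfl
    intro c hc
    have : T.faces.filter (fun f => classOf T.faces f = c) = c := by
      ext g
      simp only [Finset.mem_filter]
      constructor
      · rintro ⟨hg, hcg⟩; rw [← hcg]; exact classOf_self hg
      · intro hg; exact ⟨hCsub c hc hg, hclass_of_mem hc hg⟩
    rw [this]
  -- (S2)
  have hundisj : ∀ c₁ ∈ C, ∀ c₂ ∈ C, c₁ ≠ c₂ → Disjoint (edgesOf c₁) (edgesOf c₂) := by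
    intro c₁ h₁ c₂ h₂ hne
    rw [Finset.disjoint_left]
    intro e he1 he2
    obtain ⟨f, hf, hef, hd⟩ := mem_edgesOf.1 he1
    obtain ⟨g, hg, heg, hd2⟩ := mem_edgesOf.1 he2
    obtain ⟨⟨a, b⟩, rfl⟩ := e.exists_rep
    have hab : a ≠ b := by simpa using hd
    have hmf := Finset.mk_mem_sym2_iff.1 hef
    have hmg := Finset.mk_mem_sym2_iff.1 heg
    have hreach : DReach T.faces f g :=
      class_closed_edge (hCsub c₁ h₁ hf) (hCsub c₂ h₂ hg) hab hmf.1 hmf.2 hmg.1 hmg.2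
    apply hne
    rw [← hclass_of_mem h₁ hf, ← hclass_of_mem h₂ hg]
    exact classOf_eq hreach
  have hS2 : ∑ c ∈ C, (edgesOf c).card = (edgesOf T.faces).card := by
    have hbiu : C.biUnion (fun c => edgesOf c) = edgesOf T.faces := by
      ext e
      simp only [Finset.mem_biUnion]
      constructor
      · rintro ⟨c, hc, he⟩
        obtain ⟨f, hf, hef, hd⟩ := mem_edgesOf.1 he
        exact mem_edgesOf.2 ⟨f, hCsub c hc hf, hef, hd⟩
      · intro he
        obtain ⟨f, hf, hef, hd⟩ := mem_edgesOf.1 he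
        exact ⟨classOf T.faces f, Finset.mem_image_of_mem _ hf,
          mem_edgesOf.2 ⟨f, classOf_self hf, hef, hd⟩⟩
    rw [← hbiu, Finset.card_biUnion hundisj]
  -- (S3)
  set r : V → ℕ := fun v => (C.filter (fun c => v ∈ vertsOf c)).card with hrdef
  have hS3 : ∑ c ∈ C, (vertsOf c).card = ∑ v : V, r v := by
    have h1 : ∀ c ∈ C, (vertsOf c).card = ∑ v : V, (if v ∈ vertsOf c then 1 else 0) := by
      intro c _
      rw [← Finset.card_filter]
      rw [Finset.filter_univ_mem]
    rw [Finset.sum_congr rfl h1, Finset.sum_comm]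
    apply Finset.sum_congr rfl
    intro v _
    rw [hrdef]
    exact (Finset.card_filter (fun c => v ∈ vertsOf c) C).symm
  have hr1 : ∀ v : V, 1 ≤ r v := by
    intro v
    obtain ⟨f, hf, hvf⟩ := exists_face_mem T h4 v
    have hm : classOf T.faces f ∈ C.filter (fun c => v ∈ vertsOf c) := by
      refine Finset.mem_filter.2 ⟨Finset.mem_image_of_mem _ hf, ?_⟩
      exact mem_vertsOf.2 ⟨f, classOf_self hf, hvf⟩
    exact Finset.card_pos.2 ⟨_, hm⟩
  set k := C.card with hkdef
  set Q := Finset.univ.filter (fun v : V => 2 ≤ r v) with hQdef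
  -- numeric facts
  have htot_le : (∑ v : V, r v) + T.faces.card ≤ (edgesOf T.faces).card + 2 * k := by
    calc (∑ v : V, r v) + T.faces.card = ∑ c ∈ C, ((vertsOf c).card + c.card) := by
          rw [Finset.sum_add_distrib, hS3, hS1]
      _ ≤ ∑ c ∈ C, ((edgesOf c).card + 2) := Finset.sum_le_sum hgenus
      _ = (edgesOf T.faces).card + 2 * k := by
          rw [Finset.sum_add_distrib, hS2, Finset.sum_const, smul_eq_mul, hkdef]
          ring
  have heuler := euler_nat T h4
  have hvcard : (vertsOf T.faces).card = Fintype.card V := by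
    rw [vertsOf_faces_eq T h4]; exact Finset.card_univ
  have hsplit : (∑ v ∈ Q, r v) + (∑ v ∈ Finset.univ.filter (fun v : V => ¬ 2 ≤ r v), r v)
      = ∑ v : V, r v := Finset.sum_filter_add_sum_filter_not _ _ _
  have hrest : ∑ v ∈ Finset.univ.filter (fun v : V => ¬ 2 ≤ r v), r v
      = (Finset.univ.filter (fun v : V => ¬ 2 ≤ r v)).card := by
    rw [Finset.card_eq_sum_ones]
    apply Finset.sum_congr rfl
    intro v hv
    have h2 : ¬ 2 ≤ r v := (Finset.mem_filter.1 hv).2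
    have := hr1 v
    omega
  have hcards : Q.card + (Finset.univ.filter (fun v : V => ¬ 2 ≤ r v)).card = Fintype.card V := by
    rw [hQdef, Finset.card_filter_add_card_filter_not]
    exact Finset.card_univ
  have hmm : 2 * Q.card ≤ ∑ v ∈ Q, r v := by
    calc 2 * Q.card = ∑ _v ∈ Q, 2 := by rw [Finset.sum_const, smul_eq_mul]; ring
      _ ≤ ∑ v ∈ Q, r v := Finset.sum_le_sum (fun v hv => (Finset.mem_filter.1 hv).2)
  have hm2 : ∑ v ∈ Q, r v = ∑ c ∈ C, (Q.filter (fun v => v ∈ vertsOf c)).card := by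
    have h1 : ∀ v ∈ Q, r v = ∑ c ∈ C, (if v ∈ vertsOf c then 1 else 0) := by
      intro v _
      rw [hrdef]
      exact Finset.card_filter (fun c => v ∈ vertsOf c) C
    rw [Finset.sum_congr rfl h1, Finset.sum_comm]
    apply Finset.sum_congr rfl
    intro c _
    exact (Finset.card_filter _ _).symm
  -- there is a class with few shared vertices
  have hex_c : ∃ c ∈ C, (Q.filter (fun v => v ∈ vertsOf c)).card ≤ 3 := by
    by_contra hno
    push_neg at hno
    have h4k : 4 * k ≤ ∑ c ∈ C, (Q.filter (fun v => v ∈ vertsOf c)).card := by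
      calc 4 * k = ∑ _c ∈ C, 4 := by rw [Finset.sum_const, smul_eq_mul, hkdef]; ring
        _ ≤ _ := Finset.sum_le_sum (fun c hc => hno c hc)
    omega
  obtain ⟨c₀, hc₀, hX3⟩ := hex_c
  set X := Q.filter (fun v => v ∈ vertsOf c₀) with hXdef
  -- every class has at least 4 vertices
  have hW4 : ∀ c ∈ C, 4 ≤ (vertsOf c).card := by
    intro c hc
    obtain ⟨f, hfc⟩ := hne_class c hc
    have hfFF : f ∈ T.faces := hCsub c hc hfc
    have hf3 : f.card = 3 := hT.1 f hfFF
    obtain ⟨a, ha⟩ := Finset.card_pos.1 (by omega : 0 < f.card)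
    have herase : 0 < (f.erase a).card := by rw [Finset.card_erase_of_mem ha]; omega
    obtain ⟨b, hb⟩ := Finset.card_pos.1 herase
    have hab : a ≠ b := (Finset.ne_of_mem_erase hb).symm
    have hbf : b ∈ f := Finset.mem_of_mem_erase hb
    have h2 := hT.2 a b hab ⟨f, hfFF, ha, hbf⟩
    obtain ⟨g, hgfil, hgf⟩ := Finset.exists_mem_ne (by rw [h2]; omega) f
    have hgFF : g ∈ T.faces := (Finset.mem_filter.1 hgfil).1
    have hag : a ∈ g := (Finset.mem_filter.1 hgfil).2.1
    have hbg : b ∈ g := (Finset.mem_filter.1 hgfil).2.2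
    have hgc : g ∈ c := by
      have hreach : DReach T.faces f g := class_closed_edge hfFF hgFF hab ha hbf hag hbg
      have hmem : g ∈ classOf T.faces f := mem_classOf.2 ⟨hgFF, hreach⟩
      rwa [hclass_of_mem hc hfc] at hmem
    have hsub : f ∪ g ⊆ vertsOf c := by
      intro x hx
      rcases Finset.mem_union.1 hx with h | h
      · exact mem_vertsOf.2 ⟨f, hfc, h⟩
      · exact mem_vertsOf.2 ⟨g, hgc, h⟩
    have hcap : (f ∩ g).card ≤ 2 := by
      by_contra hcap
      push_neg at hcap
      have hfg' : f ∩ g = f := Finset.eq_of_subset_of_card_le Finset.inter_subset_left (by omega)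
      have hfsubg : f ⊆ g := by rw [← hfg']; exact Finset.inter_subset_right
      exact hgf (Finset.eq_of_subset_of_card_le hfsubg (by rw [hT.1 g hgFF, hf3])).symm
    have hunion : 4 ≤ (f ∪ g).card := by
      have hui := Finset.card_union_add_card_inter f g
      rw [hf3, hT.1 g hgFF] at hui
      omega
    exact le_trans hunion (Finset.card_le_card hsub)
  have hXW : X ⊆ vertsOf c₀ := fun v hv => (Finset.mem_filter.1 hv).2
  have hPne : ∃ x, x ∈ vertsOf c₀ ∧ x ∉ X := by
    by_contra hno
    push_neg at hno
    have hsub : vertsOf c₀ ⊆ X := fun x hx => hno x hx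
    have hle := Finset.card_le_card hsub
    have := hW4 c₀ hc₀
    omega
  obtain ⟨x, hxW, hxX⟩ := hPne
  have hYne : ∃ y : V, y ∉ vertsOf c₀ := by
    by_contra hno
    push_neg at hno
    obtain ⟨c₁, hc₁, c₂, hc₂, hc12⟩ := hk2
    have hcex : ∃ c' ∈ C, c' ≠ c₀ := by
      rcases eq_or_ne c₁ c₀ with rfl | h
      · exact ⟨c₂, hc₂, fun h' => hc12 h'.symm⟩
      · exact ⟨c₁, hc₁, h⟩
    obtain ⟨c', hc', hne'⟩ := hcex
    have hsubX : vertsOf c' ⊆ X := by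
      intro v hv
      refine Finset.mem_filter.2 ⟨?_, hno v⟩
      refine Finset.mem_filter.2 ⟨Finset.mem_univ v, ?_⟩
      have hpair : ({c₀, c'} : Finset (Finset (Finset V))) ⊆ C.filter (fun c => v ∈ vertsOf c) := by
        intro c hcmem
        rcases Finset.mem_insert.1 hcmem with rfl | hcm
        · exact Finset.mem_filter.2 ⟨hc₀, hno v⟩
        · rw [Finset.mem_singleton.1 hcm]; exact Finset.mem_filter.2 ⟨hc', hv⟩
      have hle := Finset.card_le_card hpair
      rwa [Finset.card_pair (Ne.symm hne')] at hle
    have hle2 := Finset.card_le_card hsubX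
    have := hW4 c' hc'
    omega
  obtain ⟨y, hyW⟩ := hYne
  have hnoedge : ∀ p q : V, p ∈ vertsOf c₀ → p ∉ X → q ∉ vertsOf c₀ → ¬ T.G.Adj p q := by
    intro p q hpW hpX hqW hadj
    obtain ⟨h, hh, hph, hqh⟩ := faces_filter_pair_nonempty T hadj
    have hCh : classOf T.faces h ∈ C := Finset.mem_image_of_mem _ hh
    have hcq : q ∈ vertsOf (classOf T.faces h) :=
      mem_vertsOf.2 ⟨h, classOf_self hh, hqh⟩
    have hne0 : classOf T.faces h ≠ c₀ := fun h' => hqW (h' ▸ hcq)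
    apply hpX
    refine Finset.mem_filter.2 ⟨Finset.mem_filter.2 ⟨Finset.mem_univ p, ?_⟩, hpW⟩
    have hpair : ({c₀, classOf T.faces h} : Finset (Finset (Finset V)))
        ⊆ C.filter (fun c => p ∈ vertsOf c) := by
      intro c hcmem
      rcases Finset.mem_insert.1 hcmem with rfl | hcm
      · exact Finset.mem_filter.2 ⟨hc₀, hpW⟩
      · rw [Finset.mem_singleton.1 hcm]
        exact Finset.mem_filter.2 ⟨hCh, mem_vertsOf.2 ⟨h, classOf_self hh, hph⟩⟩
    have hle := Finset.card_le_card hpair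
    rwa [Finset.card_pair (Ne.symm hne0)] at hle
  -- 4-connectivity contradiction
  have hncard : ((X : Set V)).ncard ≤ 3 := by rw [Set.ncard_coe_finset]; exact hX3
  have hconn := h4.2 (X : Set V) hncard
  have hxS : (x : V) ∈ ((X : Set V))ᶜ := by
    simp only [Set.mem_compl_iff, Finset.mem_coe]
    exact hxX
  have hyS : (y : V) ∈ ((X : Set V))ᶜ := by
    simp only [Set.mem_compl_iff, Finset.mem_coe]
    exact fun hy => hyW (hXW hy)
  have hreach := hconn.preconnected ⟨x, hxS⟩ ⟨y, hyS⟩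
  refine sep_helper T.G (X : Set V) {z : V | z ∈ vertsOf c₀ ∧ z ∉ X} ?_ ⟨y, hyS⟩ ⟨x, hxS⟩
    ⟨hxW, hxX⟩ ?_ hreach
  · intro p q hp hpS hq hqS hadj
    have hqX : q ∉ X := by
      intro hqx
      exact hqS (Finset.mem_coe.2 hqx)
    have hqW : q ∉ vertsOf c₀ := by
      intro hqw
      exact hq ⟨hqw, hqX⟩
    exact hnoedge p q hp.1 hp.2 hqW hadj
  · intro hA
    exact hyW hA.1

lemma rot_conn (v : V) :
    ∀ f ∈ T.faces, v ∈ f → ∀ g ∈ T.faces, v ∈ g → RotReach T.faces v f g := by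
  by_contra hcon
  push_neg at hcon
  obtain ⟨f₀, hf₀, hvf₀, g₀, hg₀, hvg₀, hnr⟩ := hcon
  have hT : IsTri T.faces := tri_isTri T
  set A₁ : Finset (Finset V) :=
    T.faces.filter (fun h => v ∈ h ∧ RotReach T.faces v f₀ h) with hA₁def
  have hf₀A : f₀ ∈ A₁ := Finset.mem_filter.2 ⟨hf₀, hvf₀, Relation.ReflTransGen.refl⟩
  have hg₀A : g₀ ∉ A₁ := fun h => hnr (Finset.mem_filter.1 h).2.2
  have hside : ∀ h h' : Finset V, h ∈ T.faces → h' ∈ T.faces → v ∈ h → v ∈ h' →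
      ∀ b, b ≠ v → b ∈ h → b ∈ h' → (h ∈ A₁ ↔ h' ∈ A₁) := by
    intro h h' hh hh' hvh hvh' b hbv hbh hbh'
    rcases eq_or_ne h h' with rfl | hne
    · exact Iff.rfl
    · have hadj : RotAdj T.faces v h h' := ⟨hh, hh', hne, hvh, hvh', b, hbv, hbh, hbh'⟩
      constructor
      · intro hmem
        obtain ⟨-, -, hr⟩ := Finset.mem_filter.1 hmem
        exact Finset.mem_filter.2 ⟨hh', hvh', hr.tail hadj⟩
      · intro hmem
        obtain ⟨-, -, hr⟩ := Finset.mem_filter.1 hmem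
        exact Finset.mem_filter.2 ⟨hh, hvh, hr.tail (rotadj_symm hadj)⟩
  -- the split complex on V ⊕ Unit
  set ρ : Finset V → Finset (V ⊕ Unit) := fun h =>
    if h ∈ A₁ ∨ v ∉ h then h.image Sum.inl
    else insert (Sum.inr ()) ((h.erase v).image Sum.inl) with hρdef
  set F' : Finset (Finset (V ⊕ Unit)) := T.faces.image ρ with hF'def
  have hmem_inl : ∀ (a : V) (h : Finset V), h ∈ T.faces →
      (Sum.inl a ∈ ρ h ↔ a ∈ h ∧ (a = v → h ∈ A₁)) := by
    intro a h _
    by_cases hc : h ∈ A₁ ∨ v ∉ h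
    · rw [show ρ h = h.image Sum.inl by simp only [hρdef]; rw [if_pos hc]]
      simp only [Finset.mem_image]
      constructor
      · rintro ⟨x, hx, hxe⟩
        obtain rfl : x = a := Sum.inl.inj hxe
        refine ⟨hx, ?_⟩
        rintro rfl
        rcases hc with h1 | h1
        · exact h1
        · exact absurd hx h1
      · rintro ⟨ha, -⟩; exact ⟨a, ha, rfl⟩
    · rw [show ρ h = insert (Sum.inr ()) ((h.erase v).image Sum.inl) by
        simp only [hρdef]; rw [if_neg hc]]
      push_neg at hc
      simp only [Finset.mem_insert, Finset.mem_image]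
      constructor
      · rintro (h1 | ⟨x, hx, hxe⟩)
        · exact absurd h1 (by simp)
        · obtain rfl : x = a := Sum.inl.inj hxe
          obtain ⟨hane, hah⟩ := Finset.mem_erase.1 hx
          exact ⟨hah, fun hav => absurd hav hane⟩
      · rintro ⟨ha, himp⟩
        right
        refine ⟨a, Finset.mem_erase.2 ⟨?_, ha⟩, rfl⟩
        intro hav
        exact hc.1 (himp hav)
  have hmem_inr : ∀ (h : Finset V), h ∈ T.faces →
      (Sum.inr () ∈ ρ h ↔ v ∈ h ∧ h ∉ A₁) := by
    intro h _
    by_cases hc : h ∈ A₁ ∨ v ∉ h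
    · rw [show ρ h = h.image Sum.inl by simp only [hρdef]; rw [if_pos hc]]
      simp only [Finset.mem_image]
      constructor
      · rintro ⟨x, -, hxe⟩; exact absurd hxe (by simp)
      · rintro ⟨hvh, hA⟩
        rcases hc with h1 | h1
        · exact absurd h1 hA
        · exact absurd hvh h1
    · rw [show ρ h = insert (Sum.inr ()) ((h.erase v).image Sum.inl) by
        simp only [hρdef]; rw [if_neg hc]]
      push_neg at hc
      simp only [Finset.mem_insert, Finset.mem_image]
      constructor
      · intro _; exact ⟨hc.2, hc.1⟩
      · intro _; exact Or.inl trivial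

  have hA₁v : ∀ h ∈ A₁, v ∈ h := fun h hh => (Finset.mem_filter.1 hh).2.1
  have hno_both : ∀ h ∈ T.faces, ¬ (Sum.inl v ∈ ρ h ∧ Sum.inr () ∈ ρ h) := by
    rintro h hh ⟨h1, h2⟩
    exact ((hmem_inr h hh).1 h2).2 (((hmem_inl v h hh).1 h1).2 rfl)
  have hback : ∀ h ∈ T.faces, (ρ h).image (Sum.elim id (fun _ => v)) = h := by
    intro h hh
    by_cases hc : h ∈ A₁ ∨ v ∉ h
    · rw [show ρ h = h.image Sum.inl by simp only [hρdef]; rw [if_pos hc]]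
      rw [Finset.image_image]
      simp
    · rw [show ρ h = insert (Sum.inr ()) ((h.erase v).image Sum.inl) by
        simp only [hρdef]; rw [if_neg hc]]
      push_neg at hc
      rw [Finset.image_insert, Finset.image_image]
      simp only [Sum.elim_inr]
      rw [show ((h.erase v).image (Sum.elim id (fun _ => v) ∘ Sum.inl)) = h.erase v by simp]
      exact Finset.insert_erase hc.2
  have hρ_inj : Set.InjOn ρ ↑T.faces := by
    intro h1 h1m h2 h2m heq
    have := congrArg (fun s => Finset.image (Sum.elim id (fun _ => v)) s) heq
    simpa [hback h1 (by exact_mod_cast h1m), hback h2 (by exact_mod_cast h2m)] using this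
  -- face cards
  have h3' : ∀ f' ∈ F', f'.card = 3 := by
    intro f' hf'
    obtain ⟨h, hh, rfl⟩ := Finset.mem_image.1 hf'
    have h3 := hT.1 h hh
    by_cases hc : h ∈ A₁ ∨ v ∉ h
    · rw [show ρ h = h.image Sum.inl by simp only [hρdef]; rw [if_pos hc]]
      rw [Finset.card_image_of_injective _ Sum.inl_injective]; exact h3
    · push_neg at hc
      rw [show ρ h = insert (Sum.inr ()) ((h.erase v).image Sum.inl) by
        simp only [hρdef]; rw [if_neg (by push_neg; exact hc)]]
      have he2 : (h.erase v).card = 2 := by rw [Finset.card_erase_of_mem hc.2, h3]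
      rw [Finset.card_insert_of_notMem (by simp),
        Finset.card_image_of_injective _ Sum.inl_injective, he2]
  -- filter transfer
  have hfilter_im : ∀ (x y : V ⊕ Unit),
      F'.filter (fun f => x ∈ f ∧ y ∈ f)
        = (T.faces.filter (fun h => x ∈ ρ h ∧ y ∈ ρ h)).image ρ := by
    intro x y
    ext s
    simp only [hF'def, Finset.mem_filter, Finset.mem_image]
    constructor
    · rintro ⟨⟨h, hh, rfl⟩, hp⟩
      exact ⟨h, ⟨hh, hp⟩, rfl⟩
    · rintro ⟨h, ⟨hh, hp⟩, rfl⟩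
      exact ⟨⟨h, hh, rfl⟩, hp⟩
  have hcount : ∀ (x y : V ⊕ Unit),
      (F'.filter (fun f => x ∈ f ∧ y ∈ f)).card
        = (T.faces.filter (fun h => x ∈ ρ h ∧ y ∈ ρ h)).card := by
    intro x y
    rw [hfilter_im x y]
    apply Finset.card_image_of_injOn
    exact hρ_inj.mono (by exact_mod_cast Finset.filter_subset _ _)
  -- htwo for F'
  have htwo' : ∀ x y : V ⊕ Unit, x ≠ y → (∃ f' ∈ F', x ∈ f' ∧ y ∈ f') →
      (F'.filter (fun f => x ∈ f ∧ y ∈ f)).card = 2 := by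
    intro x y hxy hex
    obtain ⟨f', hf', hxf, hyf⟩ := hex
    obtain ⟨h₀, hh₀, rfl⟩ := Finset.mem_image.1 hf'
    rw [hcount x y]
    have hmix : ∀ (b : V), b ≠ v → v ∈ h₀ → b ∈ h₀ →
        (T.faces.filter (fun h => (b ∈ h ∧ (v ∈ h ∧ (h ∈ A₁ ↔ h₀ ∈ A₁))))).card = 2 := by
      intro b hbv hvh₀ hbh₀
      have heq2 : T.faces.filter (fun h => (b ∈ h ∧ (v ∈ h ∧ (h ∈ A₁ ↔ h₀ ∈ A₁))))
          = T.faces.filter (fun h => b ∈ h ∧ v ∈ h) := by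
        apply Finset.filter_congr
        intro h hh
        constructor
        · rintro ⟨h1, h2, -⟩; exact ⟨h1, h2⟩
        · rintro ⟨h1, h2⟩
          exact ⟨h1, h2, hside h h₀ hh hh₀ h2 hvh₀ b hbv h1 hbh₀⟩
      rw [heq2]
      exact hT.2 b v hbv ⟨h₀, hh₀, hbh₀, hvh₀⟩
    match x, y, hxy, hxf, hyf with
    | Sum.inl a, Sum.inl b, hxy, hxf, hyf =>
      have hab : a ≠ b := fun h => hxy (congrArg Sum.inl h)
      have hah : a ∈ h₀ := ((hmem_inl a h₀ hh₀).1 hxf).1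
      have hbh : b ∈ h₀ := ((hmem_inl b h₀ hh₀).1 hyf).1
      by_cases hva : a = v
      · have hbv : b ≠ v := fun h => hab (by rw [hva, h])
        have hA : h₀ ∈ A₁ := ((hmem_inl a h₀ hh₀).1 hxf).2 hva
        have heq : T.faces.filter (fun h => Sum.inl a ∈ ρ h ∧ Sum.inl b ∈ ρ h)
            = T.faces.filter (fun h => (b ∈ h ∧ (v ∈ h ∧ (h ∈ A₁ ↔ h₀ ∈ A₁)))) := by
          apply Finset.filter_congr
          intro h hh
          rw [hmem_inl a h hh, hmem_inl b h hh]
          constructor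
          · rintro ⟨⟨hah', himp⟩, ⟨hbm, -⟩⟩
            exact ⟨hbm, hva ▸ hah', iff_of_true (himp hva) hA⟩
          · rintro ⟨hbm, hvh, hiff⟩
            exact ⟨⟨by rw [hva]; exact hvh, fun _ => hiff.2 hA⟩,
              ⟨hbm, fun hbv' => absurd hbv' hbv⟩⟩
        rw [heq]
        exact hmix b hbv (hva ▸ hah) hbh
      · by_cases hvb : b = v
        · have hA : h₀ ∈ A₁ := ((hmem_inl b h₀ hh₀).1 hyf).2 hvb
          have heq : T.faces.filter (fun h => Sum.inl a ∈ ρ h ∧ Sum.inl b ∈ ρ h)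
              = T.faces.filter (fun h => (a ∈ h ∧ (v ∈ h ∧ (h ∈ A₁ ↔ h₀ ∈ A₁)))) := by
            apply Finset.filter_congr
            intro h hh
            rw [hmem_inl a h hh, hmem_inl b h hh]
            constructor
            · rintro ⟨⟨ham, -⟩, ⟨hbm', himp⟩⟩
              exact ⟨ham, hvb ▸ hbm', iff_of_true (himp hvb) hA⟩
            · rintro ⟨ham, hvh, hiff⟩
              exact ⟨⟨ham, fun hav' => absurd hav' hva⟩,
                ⟨by rw [hvb]; exact hvh, fun _ => hiff.2 hA⟩⟩
          rw [heq]
          exact hmix a hva (hvb ▸ hbh) hah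
        · have heq : T.faces.filter (fun h => Sum.inl a ∈ ρ h ∧ Sum.inl b ∈ ρ h)
              = T.faces.filter (fun h => a ∈ h ∧ b ∈ h) := by
            apply Finset.filter_congr
            intro h hh
            rw [hmem_inl a h hh, hmem_inl b h hh]
            constructor
            · rintro ⟨⟨h1, -⟩, ⟨h2, -⟩⟩; exact ⟨h1, h2⟩
            · rintro ⟨h1, h2⟩
              exact ⟨⟨h1, fun hv' => absurd hv' hva⟩, ⟨h2, fun hv' => absurd hv' hvb⟩⟩
          rw [heq]
          exact hT.2 a b hab ⟨h₀, hh₀, hah, hbh⟩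
    | Sum.inl a, Sum.inr (), hxy, hxf, hyf =>
      have hnA : h₀ ∉ A₁ := ((hmem_inr h₀ hh₀).1 hyf).2
      have hvh₀ : v ∈ h₀ := ((hmem_inr h₀ hh₀).1 hyf).1
      have hah : a ∈ h₀ := ((hmem_inl a h₀ hh₀).1 hxf).1
      have hav : a ≠ v := fun hva => hnA (((hmem_inl a h₀ hh₀).1 hxf).2 hva)
      have heq : T.faces.filter (fun h => Sum.inl a ∈ ρ h ∧ Sum.inr () ∈ ρ h)
          = T.faces.filter (fun h => (a ∈ h ∧ (v ∈ h ∧ (h ∈ A₁ ↔ h₀ ∈ A₁)))) := by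
        apply Finset.filter_congr
        intro h hh
        rw [hmem_inl a h hh, hmem_inr h hh]
        constructor
        · rintro ⟨⟨h1, -⟩, ⟨h2, h3⟩⟩
          exact ⟨h1, h2, iff_of_false h3 hnA⟩
        · rintro ⟨h1, h2, hiff⟩
          exact ⟨⟨h1, fun hv' => absurd hv' hav⟩, ⟨h2, fun hA => hnA (hiff.1 hA)⟩⟩
      rw [heq]
      exact hmix a hav hvh₀ hah
    | Sum.inr (), Sum.inl a, hxy, hxf, hyf =>
      have hnA : h₀ ∉ A₁ := ((hmem_inr h₀ hh₀).1 hxf).2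
      have hvh₀ : v ∈ h₀ := ((hmem_inr h₀ hh₀).1 hxf).1
      have hah : a ∈ h₀ := ((hmem_inl a h₀ hh₀).1 hyf).1
      have hav : a ≠ v := fun hva => hnA (((hmem_inl a h₀ hh₀).1 hyf).2 hva)
      have heq : T.faces.filter (fun h => Sum.inr () ∈ ρ h ∧ Sum.inl a ∈ ρ h)
          = T.faces.filter (fun h => (a ∈ h ∧ (v ∈ h ∧ (h ∈ A₁ ↔ h₀ ∈ A₁)))) := by
        apply Finset.filter_congr
        intro h hh
        rw [hmem_inl a h hh, hmem_inr h hh]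
        constructor
        · rintro ⟨⟨h2, h3⟩, ⟨h1, -⟩⟩
          exact ⟨h1, h2, iff_of_false h3 hnA⟩
        · rintro ⟨h1, h2, hiff⟩
          exact ⟨⟨h2, fun hA => hnA (hiff.1 hA)⟩, ⟨h1, fun hv' => absurd hv' hav⟩⟩
      rw [heq]
      exact hmix a hav hvh₀ hah
    | Sum.inr (), Sum.inr (), hxy, hxf, hyf => exact absurd rfl hxy
  have hTri' : IsTri F' := ⟨h3', htwo'⟩
  have hne' : F'.Nonempty := ⟨ρ f₀, Finset.mem_image_of_mem _ hf₀⟩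
  -- dual connectivity of F'
  have hlift : ∀ h h' : Finset V, Dadj T.faces h h' → Dadj F' (ρ h) (ρ h') := by
    rintro h h' ⟨hh, hh', hne, a, b, hab, ha1, ha2, hb1, hb2⟩
    have hρne : ρ h ≠ ρ h' := fun hEq =>
      hne (hρ_inj (by exact_mod_cast hh) (by exact_mod_cast hh') hEq)
    have hmemF : ρ h ∈ F' := Finset.mem_image_of_mem _ hh
    have hmemF' : ρ h' ∈ F' := Finset.mem_image_of_mem _ hh'
    have hpair : ∀ (c d : V), c ≠ d → c ∈ h → c ∈ h' → d ∈ h → d ∈ h' → d ≠ v →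
        Dadj F' (ρ h) (ρ h') := by
      intro c d hcd hc1 hc2 hd1 hd2 hdv
      by_cases hvc : c = v
      · have hsides := hside h h' hh hh' (hvc ▸ hc1) (hvc ▸ hc2) d hdv hd1 hd2
        by_cases hA : h ∈ A₁
        · exact ⟨hmemF, hmemF', hρne, Sum.inl v, Sum.inl d,
            fun hEq => hdv (Sum.inl.inj hEq).symm,
            (hmem_inl v h hh).2 ⟨hvc ▸ hc1, fun _ => hA⟩,
            (hmem_inl v h' hh').2 ⟨hvc ▸ hc2, fun _ => hsides.1 hA⟩,
            (hmem_inl d h hh).2 ⟨hd1, fun hc => absurd hc hdv⟩,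
            (hmem_inl d h' hh').2 ⟨hd2, fun hc => absurd hc hdv⟩⟩
        · have hA' : h' ∉ A₁ := fun hc => hA (hsides.2 hc)
          exact ⟨hmemF, hmemF', hρne, Sum.inr (), Sum.inl d, by simp,
            (hmem_inr h hh).2 ⟨hvc ▸ hc1, hA⟩, (hmem_inr h' hh').2 ⟨hvc ▸ hc2, hA'⟩,
            (hmem_inl d h hh).2 ⟨hd1, fun hc => absurd hc hdv⟩,
            (hmem_inl d h' hh').2 ⟨hd2, fun hc => absurd hc hdv⟩⟩
      · exact ⟨hmemF, hmemF', hρne, Sum.inl c, Sum.inl d,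
          fun hEq => hcd (Sum.inl.inj hEq),
          (hmem_inl c h hh).2 ⟨hc1, fun hv' => absurd hv' hvc⟩,
          (hmem_inl c h' hh').2 ⟨hc2, fun hv' => absurd hv' hvc⟩,
          (hmem_inl d h hh).2 ⟨hd1, fun hc => absurd hc hdv⟩,
          (hmem_inl d h' hh').2 ⟨hd2, fun hc => absurd hc hdv⟩⟩
    by_cases hvb : b = v
    · have hav : a ≠ v := fun hva => hab (hva.trans hvb.symm)
      exact hpair b a (fun hEq => hab hEq.symm) hb1 hb2 ha1 ha2 hav
    · exact hpair a b hab ha1 ha2 hb1 hb2 hvb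
  have hD' : ∀ f' ∈ F', ∀ g' ∈ F', DReach F' f' g' := by
    intro f' hf' g' hg'
    obtain ⟨h, hh, rfl⟩ := Finset.mem_image.1 hf'
    obtain ⟨h2, hh2, rfl⟩ := Finset.mem_image.1 hg'
    have hr := hD_global T h4 h hh h2 hh2
    clear hf' hg' hh hh2
    induction hr with
    | refl => exact Relation.ReflTransGen.refl
    | tail hx hadj ih =>
        exact Relation.ReflTransGen.tail ih (hlift _ _ hadj)
  -- counting
  have hverts : vertsOf F' = Finset.univ := by
    ext x
    simp only [Finset.mem_univ, iff_true]
    rcases x with a | u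
    · by_cases hav : a = v
      · exact mem_vertsOf.2 ⟨ρ f₀, Finset.mem_image_of_mem _ hf₀,
          (hmem_inl a f₀ hf₀).2 ⟨hav ▸ hvf₀, fun _ => hf₀A⟩⟩
      · obtain ⟨f, hf, haf⟩ := exists_face_mem T h4 a
        exact mem_vertsOf.2 ⟨ρ f, Finset.mem_image_of_mem _ hf,
          (hmem_inl a f hf).2 ⟨haf, fun hc => absurd hc hav⟩⟩
    · cases u
      exact mem_vertsOf.2 ⟨ρ g₀, Finset.mem_image_of_mem _ hg₀,
        (hmem_inr g₀ hg₀).2 ⟨hvg₀, hg₀A⟩⟩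
  have hvcard' : (vertsOf F').card = Fintype.card V + 1 := by
    rw [hverts, Finset.card_univ, Fintype.card_sum]
    simp
  have hfcard' : F'.card = T.faces.card := Finset.card_image_of_injOn hρ_inj
  -- edge counting via the projection
  set π : V ⊕ Unit → V := Sum.elim id (fun _ => v) with hπdef
  have hπface : ∀ h ∈ T.faces, ∀ x ∈ ρ h, π x ∈ h := by
    intro h hh x hx
    rcases x with a | u
    · exact ((hmem_inl a h hh).1 hx).1
    · cases u; exact ((hmem_inr h hh).1 hx).1
  have hπv : ∀ (x : V ⊕ Unit), π x = v → x = Sum.inl v ∨ x = Sum.inr () := by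
    intro x hx
    rcases x with a | u
    · have ha : a = v := hx
      exact Or.inl (by rw [ha])
    · cases u; exact Or.inr rfl
  have hπnev : ∀ (x : V ⊕ Unit) (b : V), π x = b → b ≠ v → x = Sum.inl b := by
    intro x b hx hbv
    rcases x with a | u
    · have ha : a = b := hx
      rw [ha]
    · cases u
      have hv : v = b := hx
      exact absurd hv.symm hbv
  -- main injectivity helper
  have hmain : ∀ (x1 y1 x2 y2 : V ⊕ Unit) (h1 h2 : Finset V), h1 ∈ T.faces → h2 ∈ T.faces →
      x1 ∈ ρ h1 → y1 ∈ ρ h1 → x2 ∈ ρ h2 → y2 ∈ ρ h2 → x1 ≠ y1 →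
      π x1 = π x2 → π y1 = π y2 → x1 = x2 ∧ y1 = y2 := by
    intro x1 y1 x2 y2 h1 h2 hh1 hh2 hx1 hy1 hx2 hy2 hne1 hπx hπy
    -- first, y's
    have hyv : π y1 ≠ v → (y1 = Sum.inl (π y1) ∧ y2 = Sum.inl (π y1)) := by
      intro hbv
      exact ⟨hπnev y1 (π y1) rfl hbv, hπnev y2 (π y1) hπy.symm hbv⟩
    have hxv : π x1 ≠ v → (x1 = Sum.inl (π x1) ∧ x2 = Sum.inl (π x1)) := by
      intro hbv
      exact ⟨hπnev x1 (π x1) rfl hbv, hπnev x2 (π x1) hπx.symm hbv⟩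
    by_cases hxvv : π x1 = v
    · -- then π y1 ≠ v
      have hyvv : π y1 ≠ v := by
        intro hyv'
        rcases hπv x1 hxvv with rfl | rfl <;> rcases hπv y1 hyv' with rfl | rfl
        · exact hne1 rfl
        · exact hno_both h1 hh1 ⟨hx1, hy1⟩
        · exact hno_both h1 hh1 ⟨hy1, hx1⟩
        · exact hne1 rfl
      obtain ⟨hy1e, hy2e⟩ := hyv hyvv
      refine ⟨?_, hy1e.trans hy2e.symm⟩
      -- x's : both over v
      have hx2v : π x2 = v := by rw [← hπx]; exact hxvv
      rcases hπv x1 hxvv with rfl | rfl <;> rcases hπv x2 hx2v with rfl | rfl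
      · rfl
      · -- x1 = inl v ∈ ρ h1, x2 = inr ∈ ρ h2 : contradiction via hside
        exfalso
        have hA1 : h1 ∈ A₁ := ((hmem_inl v h1 hh1).1 hx1).2 rfl
        have hA2 : h2 ∉ A₁ := ((hmem_inr h2 hh2).1 hx2).2
        have hvh1 : v ∈ h1 := ((hmem_inl v h1 hh1).1 hx1).1
        have hvh2 : v ∈ h2 := ((hmem_inr h2 hh2).1 hx2).1
        have hb1 : π y1 ∈ h1 := by rw [hy1e] at hy1; exact ((hmem_inl (π y1) h1 hh1).1 hy1).1
        have hb2 : π y1 ∈ h2 := by rw [hy2e] at hy2; exact ((hmem_inl (π y1) h2 hh2).1 hy2).1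
        exact hA2 ((hside h1 h2 hh1 hh2 hvh1 hvh2 (π y1) hyvv hb1 hb2).1 hA1)
      · exfalso
        have hA1 : h2 ∈ A₁ := ((hmem_inl v h2 hh2).1 hx2).2 rfl
        have hA2 : h1 ∉ A₁ := ((hmem_inr h1 hh1).1 hx1).2
        have hvh1 : v ∈ h1 := ((hmem_inr h1 hh1).1 hx1).1
        have hvh2 : v ∈ h2 := ((hmem_inl v h2 hh2).1 hx2).1
        have hb1 : π y1 ∈ h1 := by rw [hy1e] at hy1; exact ((hmem_inl (π y1) h1 hh1).1 hy1).1
        have hb2 : π y1 ∈ h2 := by rw [hy2e] at hy2; exact ((hmem_inl (π y1) h2 hh2).1 hy2).1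
        exact hA2 ((hside h2 h1 hh2 hh1 hvh2 hvh1 (π y1) hyvv hb2 hb1).1 hA1)
      · rfl
    · obtain ⟨hx1e, hx2e⟩ := hxv hxvv
      refine ⟨hx1e.trans hx2e.symm, ?_⟩
      by_cases hyvv : π y1 = v
      · have hy2v : π y2 = v := by rw [← hπy]; exact hyvv
        rcases hπv y1 hyvv with rfl | rfl <;> rcases hπv y2 hy2v with rfl | rfl
        · rfl
        · exfalso
          have hA1 : h1 ∈ A₁ := ((hmem_inl v h1 hh1).1 hy1).2 rfl
          have hA2 : h2 ∉ A₁ := ((hmem_inr h2 hh2).1 hy2).2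
          have hvh1 : v ∈ h1 := ((hmem_inl v h1 hh1).1 hy1).1
          have hvh2 : v ∈ h2 := ((hmem_inr h2 hh2).1 hy2).1
          have hb1 : π x1 ∈ h1 := by rw [hx1e] at hx1; exact ((hmem_inl (π x1) h1 hh1).1 hx1).1
          have hb2 : π x1 ∈ h2 := by rw [hx2e] at hx2; exact ((hmem_inl (π x1) h2 hh2).1 hx2).1
          exact hA2 ((hside h1 h2 hh1 hh2 hvh1 hvh2 (π x1) hxvv hb1 hb2).1 hA1)
        · exfalso
          have hA1 : h2 ∈ A₁ := ((hmem_inl v h2 hh2).1 hy2).2 rfl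
          have hA2 : h1 ∉ A₁ := ((hmem_inr h1 hh1).1 hy1).2
          have hvh1 : v ∈ h1 := ((hmem_inr h1 hh1).1 hy1).1
          have hvh2 : v ∈ h2 := ((hmem_inl v h2 hh2).1 hy2).1
          have hb1 : π x1 ∈ h1 := by rw [hx1e] at hx1; exact ((hmem_inl (π x1) h1 hh1).1 hx1).1
          have hb2 : π x1 ∈ h2 := by rw [hx2e] at hx2; exact ((hmem_inl (π x1) h2 hh2).1 hx2).1
          exact hA2 ((hside h2 h1 hh2 hh1 hvh2 hvh1 (π x1) hxvv hb2 hb1).1 hA1)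
        · rfl
      · obtain ⟨hy1e, hy2e⟩ := hyv hyvv
        exact hy1e.trans hy2e.symm
  have hedge_into : ∀ e ∈ edgesOf F', Sym2.map π e ∈ edgesOf T.faces := by
    intro e he
    obtain ⟨f', hf', hef, hd⟩ := mem_edgesOf.1 he
    obtain ⟨h, hh, rfl⟩ := Finset.mem_image.1 hf'
    obtain ⟨⟨x, y⟩, rfl⟩ := e.exists_rep
    have hx : x ∈ ρ h := (Finset.mk_mem_sym2_iff.1 hef).1
    have hy : y ∈ ρ h := (Finset.mk_mem_sym2_iff.1 hef).2
    have hxy : x ≠ y := by simpa using hd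
    have hπxy : π x ≠ π y := by
      intro hEq
      exact hxy (hmain x y y x h h hh hh hx hy hy hx hxy hEq hEq.symm).1
    rw [Sym2.map_pair_eq]
    exact edge_mk_mem hh (hπface h hh x hx) (hπface h hh y hy) hπxy
  have hedge_inj : Set.InjOn (Sym2.map π) ↑(edgesOf F') := by
    intro e1 he1 e2 he2 heq
    have he1' : e1 ∈ edgesOf F' := by exact_mod_cast he1
    have he2' : e2 ∈ edgesOf F' := by exact_mod_cast he2
    obtain ⟨f1', hf1', hef1, hd1⟩ := mem_edgesOf.1 he1'
    obtain ⟨h1, hh1, rfl⟩ := Finset.mem_image.1 hf1'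
    obtain ⟨f2', hf2', hef2, hd2⟩ := mem_edgesOf.1 he2'
    obtain ⟨h2, hh2, rfl⟩ := Finset.mem_image.1 hf2'
    obtain ⟨⟨x1, y1⟩, rfl⟩ := e1.exists_rep
    obtain ⟨⟨x2, y2⟩, rfl⟩ := e2.exists_rep
    have hx1 : x1 ∈ ρ h1 := (Finset.mk_mem_sym2_iff.1 hef1).1
    have hy1 : y1 ∈ ρ h1 := (Finset.mk_mem_sym2_iff.1 hef1).2
    have hx2 : x2 ∈ ρ h2 := (Finset.mk_mem_sym2_iff.1 hef2).1
    have hy2 : y2 ∈ ρ h2 := (Finset.mk_mem_sym2_iff.1 hef2).2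
    have hne1 : x1 ≠ y1 := by simpa using hd1
    rw [Sym2.map_pair_eq, Sym2.map_pair_eq] at heq
    rcases (Sym2.mk_eq_mk_iff (p := (π x1, π y1)) (q := (π x2, π y2))).1 heq with hp | hp
    · have hπx : π x1 = π x2 := congrArg Prod.fst hp
      have hπy : π y1 = π y2 := congrArg Prod.snd hp
      obtain ⟨hxe, hye⟩ := hmain x1 y1 x2 y2 h1 h2 hh1 hh2 hx1 hy1 hx2 hy2 hne1 hπx hπy
      rw [hxe, hye]
    · have hπx : π x1 = π y2 := congrArg Prod.fst hp
      have hπy : π y1 = π x2 := congrArg Prod.snd hp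
      obtain ⟨hxe, hye⟩ := hmain x1 y1 y2 x2 h1 h2 hh1 hh2 hx1 hy1 hy2 hx2 hne1 hπx hπy
      rw [hxe, hye]
      exact Sym2.eq_swap
  have hecard : (edgesOf F').card ≤ (edgesOf T.faces).card :=
    Finset.card_le_card_of_injOn (Sym2.map π) hedge_into hedge_inj
  -- genus contradiction
  have hgen := (genus_main F' hTri' hne' hD').1
  have heuler := euler_nat T h4
  have hvcard : (vertsOf T.faces).card = Fintype.card V := by
    rw [vertsOf_faces_eq T h4]; exact Finset.card_univ
  omega

lemma triangle_is_face {a b c : V} (hab : T.G.Adj a b) (hbc : T.G.Adj b c)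
    (hac : T.G.Adj a c) : ({a, b, c} : Finset V) ∈ T.faces := by
  by_contra hnot
  have hT : IsTri T.faces := tri_isTri T
  have hD := hD_global T h4
  have hFne : T.faces.Nonempty := by
    obtain ⟨f, hf, -⟩ := exists_face_mem T h4 a
    exact ⟨f, hf⟩
  have heuler := euler_nat T h4
  have hZB := (genus_main T.faces hT hFne hD).2 heuler
  have hedge : ∀ {x y : V}, T.G.Adj x y → s(x,y) ∈ edgesOf T.faces := by
    intro x y hxy
    have hcoe := edgesOf_faces_coe T h4
    have hm : s(x,y) ∈ (↑(edgesOf T.faces) : Set (Sym2 V)) := by rw [hcoe]; exact hxy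
    exact_mod_cast hm
  set e1 : ↥(edgesOf T.faces) := ⟨s(a,b), hedge hab⟩ with he1def
  set e2 : ↥(edgesOf T.faces) := ⟨s(b,c), hedge hbc⟩ with he2def
  set e3 : ↥(edgesOf T.faces) := ⟨s(a,c), hedge hac⟩ with he3def
  set cv : ↥(edgesOf T.faces) → ZMod 2 :=
    Pi.single e1 1 + Pi.single e2 1 + Pi.single e3 1 with hcvdef
  have hne12 : e1 ≠ e2 := by
    intro hEq
    have h' : s(a,b) = s(b,c) := congrArg Subtype.val hEq
    rcases (Sym2.mk_eq_mk_iff (p := (a,b)) (q := (b,c))).1 h' with hp | hp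
    · exact hab.ne (congrArg Prod.fst hp)
    · exact hac.ne ((congrArg Prod.fst hp).trans rfl)
  have hne13 : e1 ≠ e3 := by
    intro hEq
    have h' : s(a,b) = s(a,c) := congrArg Subtype.val hEq
    rcases (Sym2.mk_eq_mk_iff (p := (a,b)) (q := (a,c))).1 h' with hp | hp
    · exact hbc.ne (congrArg Prod.snd hp)
    · exact hac.ne ((congrArg Prod.fst hp).trans rfl)
  -- cv is in the kernel of del
  have hcker : cv ∈ LinearMap.ker (delMap T.faces) := by
    rw [LinearMap.mem_ker, hcvdef, map_add, map_add,
      del_single hab.ne (hedge hab), del_single hbc.ne (hedge hbc),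
      del_single hac.ne (hedge hac)]
    unfold sgl
    funext t
    simp only [Pi.add_apply, Pi.zero_apply, Pi.single_apply, Subtype.ext_iff]
    by_cases h1 : (t : V) = a <;> by_cases h2 : (t : V) = b <;> by_cases h3 : (t : V) = c
    all_goals
      first
        | exact absurd (h1.symm.trans h2) hab.ne
        | exact absurd (h1.symm.trans h3) hac.ne
        | exact absurd (h2.symm.trans h3) hbc.ne
        | (simp [h1, h2, h3, hab.ne, hbc.ne, hac.ne, Ne.symm hab.ne, Ne.symm hbc.ne,
            Ne.symm hac.ne, CharTwo.add_self_eq_zero])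
  have hcrange : cv ∈ LinearMap.range (phiMap T.faces) := by rw [hZB]; exact hcker
  obtain ⟨z, hz⟩ := hcrange
  -- no face is contained in {a,b,c}
  have htri_notface : ∀ f ∈ T.faces, ∃ x ∈ f, x ∉ ({a,b,c} : Finset V) := by
    intro f hf
    by_contra hno
    push_neg at hno
    have hsub : f ⊆ ({a,b,c} : Finset V) := fun x hx => hno x hx
    have h3 : ({a,b,c} : Finset V).card ≤ 3 := by
      apply le_trans (Finset.card_insert_le _ _)
      have := Finset.card_insert_le b ({c} : Finset V)
      simp only [Finset.card_singleton] at this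
      omega
    have hfc := hT.1 f hf
    have : f = ({a,b,c} : Finset V) := Finset.eq_of_subset_of_card_le hsub (by omega)
    exact hnot (this ▸ hf)
  -- cv vanishes on edges not in the triangle
  have hcv0 : ∀ (e : ↥(edgesOf T.faces)), (↑e : Sym2 V) ≠ s(a,b) →
      (↑e : Sym2 V) ≠ s(b,c) → (↑e : Sym2 V) ≠ s(a,c) → cv e = 0 := by
    intro e h1 h2 h3
    rw [hcvdef]
    simp only [Pi.add_apply, Pi.single_apply]
    rw [if_neg (fun hEq => h1 (congrArg Subtype.val hEq)),
      if_neg (fun hEq => h2 (congrArg Subtype.val hEq)),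
      if_neg (fun hEq => h3 (congrArg Subtype.val hEq))]
    simp
  -- z is rotation-constant at vertices off the triangle
  have hconst : ∀ (x : V), x ∉ ({a,b,c} : Finset V) →
      ∀ f (hf : f ∈ T.faces), x ∈ f → ∀ g (hg : g ∈ T.faces), x ∈ g →
      z ⟨f, hf⟩ = z ⟨g, hg⟩ := by
    intro x hxS f hf hxf g hg hxg
    have hr := rot_conn T h4 x f hf hxf g hg hxg
    clear hxf hxg
    induction hr with
    | refl => rfl
    | @tail m q hr hadj ih =>
        obtain ⟨hm, hq, hnemq, hxm, hxq, u, hux, hum, huq⟩ := hadj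
        have hxu : T.G.Adj x u := T.face_clique m hm x hxm u hum (Ne.symm hux)
        have hexu : s(x,u) ∈ edgesOf T.faces := hedge hxu
        have hval : phiMap T.faces z ⟨s(x,u), hexu⟩ = z ⟨m, hm⟩ + z ⟨q, hq⟩ :=
          phi_eval hT z hexu hm hq hnemq (Finset.mk_mem_sym2_iff.2 ⟨hxm, hum⟩)
            (Finset.mk_mem_sym2_iff.2 ⟨hxq, huq⟩)
        have hnotin : ∀ (p r : V), s(x,u) = s(p,r) → x = p ∨ x = r := by
          intro p r hEq
          have : x ∈ s(p,r) := by rw [← hEq]; simp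
          simpa using this
        have hc0 : cv ⟨s(x,u), hexu⟩ = 0 := by
          apply hcv0
          · intro hEq
            rcases hnotin a b hEq with rfl | rfl <;> simp at hxS
          · intro hEq
            rcases hnotin b c hEq with rfl | rfl <;> simp at hxS
          · intro hEq
            rcases hnotin a c hEq with rfl | rfl <;> simp at hxS
        have hsum0 : z ⟨m, hm⟩ + z ⟨q, hq⟩ = 0 := by
          rw [← hval, hz]; exact hc0
        exact (ih hm).trans (zmod2_eq_of_add_eq_zero hsum0).symm
  -- a face with value 1
  have hcv_e1 : cv e1 = 1 := by
    rw [hcvdef]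
    simp [Pi.single_apply, hne12, hne13]
  have hval1 : ∃ f, ∃ hf : f ∈ T.faces, z ⟨f, hf⟩ = 1 := by
    have h2f := two_faces hT (hedge hab)
    obtain ⟨g1, g2, hg12, hfil⟩ := Finset.card_eq_two.1 h2f
    have hg1m : g1 ∈ T.faces ∧ s(a,b) ∈ g1.sym2 := by
      have : g1 ∈ T.faces.filter (fun f => s(a,b) ∈ f.sym2) := by rw [hfil]; simp
      exact ⟨(Finset.mem_filter.1 this).1, (Finset.mem_filter.1 this).2⟩
    have hg2m : g2 ∈ T.faces ∧ s(a,b) ∈ g2.sym2 := by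
      have : g2 ∈ T.faces.filter (fun f => s(a,b) ∈ f.sym2) := by rw [hfil]; simp
      exact ⟨(Finset.mem_filter.1 this).1, (Finset.mem_filter.1 this).2⟩
    have hval : phiMap T.faces z ⟨s(a,b), hedge hab⟩ = z ⟨g1, hg1m.1⟩ + z ⟨g2, hg2m.1⟩ :=
      phi_eval hT z (hedge hab) hg1m.1 hg2m.1 hg12 hg1m.2 hg2m.2
    have hsum : z ⟨g1, hg1m.1⟩ + z ⟨g2, hg2m.1⟩ = 1 := by
      rw [← hval, hz]; exact hcv_e1
    rcases zmod2_cases (z ⟨g1, hg1m.1⟩) with h0 | h1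
    · refine ⟨g2, hg2m.1, ?_⟩
      rw [h0, zero_add] at hsum
      exact hsum
    · exact ⟨g1, hg1m.1, h1⟩
  -- a face with value 0
  have hval0 : ∃ f, ∃ hf : f ∈ T.faces, z ⟨f, hf⟩ = 0 := by
    by_contra hno
    push_neg at hno
    have hz1 : z = fun _ => 1 := by
      funext f
      rcases zmod2_cases (z f) with h0 | h1
      · exact absurd h0 (hno f.1 f.2)
      · exact h1
    have hphi0 : phiMap T.faces z = 0 := by
      rw [hz1]
      funext e
      show (∑ f : ↥T.faces, if (e:Sym2 V) ∈ (f:Finset V).sym2 then (1:ZMod 2) else 0) = 0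
      rw [sum_subtype_ite (fun f : ↥T.faces => (e:Sym2 V) ∈ (f:Finset V).sym2) (1:ZMod 2)]
      rw [card_filter_univ_subtype T.faces (fun f => (e:Sym2 V) ∈ f.sym2)]
      rw [two_faces hT e.2]
      exact zmod2_two_nsmul 1
    rw [hphi0] at hz
    have : cv e1 = 0 := by rw [← hz]; rfl
    rw [hcv_e1] at this
    exact one_ne_zero this
  obtain ⟨f1, hf1, hzf1⟩ := hval1
  obtain ⟨f0, hf0, hzf0⟩ := hval0
  obtain ⟨x1, hx1f, hx1S⟩ := htri_notface f1 hf1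
  obtain ⟨x0, hx0f, hx0S⟩ := htri_notface f0 hf0
  -- the separation
  set S : Set V := ↑({a,b,c} : Finset V) with hSdef
  set A : Set V := {p : V | p ∉ ({a,b,c} : Finset V) ∧
    ∃ f, ∃ hf : f ∈ T.faces, p ∈ f ∧ z ⟨f, hf⟩ = 1} with hAdef
  have hncard : S.ncard ≤ 3 := by
    rw [hSdef, Set.ncard_coe_finset]
    apply le_trans (Finset.card_insert_le _ _)
    have := Finset.card_insert_le b ({c} : Finset V)
    simp only [Finset.card_singleton] at this
    omega
  have hconnS := h4.2 S hncard
  have hx1c : x1 ∈ Sᶜ := by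
    simp only [hSdef, Set.mem_compl_iff, Finset.mem_coe]
    exact hx1S
  have hx0c : x0 ∈ Sᶜ := by
    simp only [hSdef, Set.mem_compl_iff, Finset.mem_coe]
    exact hx0S
  have hreach := hconnS.preconnected ⟨x1, hx1c⟩ ⟨x0, hx0c⟩
  refine sep_helper T.G S A ?_ ⟨x0, hx0c⟩ ⟨x1, hx1c⟩ ⟨hx1S, f1, hf1, hx1f, hzf1⟩ ?_ hreach
  · intro p q hp hpS hq hqS hadj
    obtain ⟨hpS', f, hf, hpf, hzf⟩ := hp
    obtain ⟨g, hg, hpg, hqg⟩ := faces_filter_pair_nonempty T hadj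
    have hzg : z ⟨g, hg⟩ = 1 := by
      rw [← hconst p hpS' f hf hpf g hg hpg]
      exact hzf
    apply hq
    refine ⟨?_, g, hg, hqg, hzg⟩
    intro hqmem
    exact hqS (by rw [hSdef]; exact Finset.mem_coe.2 hqmem)
  · intro hx0A
    obtain ⟨-, f, hf, hx0f', hzf⟩ := hx0A
    have : z ⟨f0, hf0⟩ = z ⟨f, hf⟩ := hconst x0 hx0S f0 hf0 hx0f f hf hx0f'
    rw [hzf0, hzf] at this
    exact zero_ne_one this

end MainT

/-- In a 4-connected plane triangulation, the neighbourhood of every vertex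
induces a cycle. -/
theorem stmt3 {V : Type*} [Fintype V] [DecidableEq V] (T : PlaneTriangulation V)
    (h4 : FourConnected T.G) (v : V) :
    IsCycleGraph (T.G.induce (T.G.neighborSet v)) := by
  classical
  obtain ⟨u0, hu0⟩ := exists_adj T h4 v
  have hT : IsTri T.faces := tri_isTri T
  have hmemN : ∀ {f : Finset V}, f ∈ T.faces → v ∈ f → ∀ {a : V}, a ∈ f → a ≠ v →
      a ∈ T.G.neighborSet v := by
    intro f hf hvf a haf hav
    exact T.face_clique f hf v hvf a haf (Ne.symm hav)
  have hstep : ∀ (f : Finset V) (hf : f ∈ T.faces) (hvf : v ∈ f) (a : V) (haf : a ∈ f)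
      (hav : a ≠ v) (b : V) (hbf : b ∈ f) (hbv : b ≠ v),
      (T.G.induce (T.G.neighborSet v)).Reachable ⟨a, hmemN hf hvf haf hav⟩
        ⟨b, hmemN hf hvf hbf hbv⟩ := by
    intro f hf hvf a haf hav b hbf hbv
    rcases eq_or_ne a b with rfl | hab
    · exact SimpleGraph.Reachable.refl _
    · exact SimpleGraph.Adj.reachable (T.face_clique f hf a haf b hbf hab)
  have hwalk : ∀ (f g : Finset V), RotReach T.faces v f g →
      ∀ (hf : f ∈ T.faces) (hvf : v ∈ f) (hg : g ∈ T.faces) (hvg : v ∈ g)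
        (a : V) (haf : a ∈ f) (hav : a ≠ v) (b : V) (hbg : b ∈ g) (hbv : b ≠ v),
      (T.G.induce (T.G.neighborSet v)).Reachable ⟨a, hmemN hf hvf haf hav⟩
        ⟨b, hmemN hg hvg hbg hbv⟩ := by
    intro f g hr
    induction hr with
    | refl =>
        intro hf hvf hg hvg a haf hav b hbg hbv
        exact hstep f hf hvf a haf hav b hbg hbv
    | @tail m q hr hadj ih =>
        intro hf hvf hg hvg a haf hav b hbg hbv
        obtain ⟨hm, hq, hne, hvm, hvq, u, huv, hum, huq⟩ := hadj
        exact (ih hf hvf hm hvm a haf hav u hum huv).trans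
          (hstep q hq hvq u huq huv b hbg hbv)
  refine ⟨⟨⟨u0, hu0⟩⟩, ?_, ?_⟩
  · rw [SimpleGraph.connected_iff]
    refine ⟨?_, ⟨⟨u0, hu0⟩⟩⟩
    rintro ⟨x, hx⟩ ⟨y, hy⟩
    have hax : T.G.Adj v x := hx
    have hay : T.G.Adj v y := hy
    obtain ⟨f, hf, hvf, hxf⟩ := faces_filter_pair_nonempty T hax
    obtain ⟨g, hg, hvg, hyg⟩ := faces_filter_pair_nonempty T hay
    exact hwalk f g (rot_conn T h4 v f hf hvf g hg hvg) hf hvf hg hvg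
      x hxf (Ne.symm hax.ne) y hyg (Ne.symm hay.ne)
  · intro u
    have hadjvu : T.G.Adj v ↑u := u.2
    have h2 := T.edge_two_faces v ↑u hadjvu
    obtain ⟨g1, g2, hg12, hfilpair⟩ := Finset.card_eq_two.1 h2
    have hg1mem : g1 ∈ T.faces.filter (fun f => v ∈ f ∧ (u:V) ∈ f) := by
      rw [hfilpair]; exact Finset.mem_insert_self _ _
    have hg2mem : g2 ∈ T.faces.filter (fun f => v ∈ f ∧ (u:V) ∈ f) := by
      rw [hfilpair]; exact Finset.mem_insert_of_mem (Finset.mem_singleton_self _)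
    have hg1 : g1 ∈ T.faces := (Finset.mem_filter.1 hg1mem).1
    have hg1v : v ∈ g1 := (Finset.mem_filter.1 hg1mem).2.1
    have hg1u : (u:V) ∈ g1 := (Finset.mem_filter.1 hg1mem).2.2
    have hg2 : g2 ∈ T.faces := (Finset.mem_filter.1 hg2mem).1
    have hg2v : v ∈ g2 := (Finset.mem_filter.1 hg2mem).2.1
    have hg2u : (u:V) ∈ g2 := (Finset.mem_filter.1 hg2mem).2.2
    have hthird : ∀ g, g ∈ T.faces → v ∈ g → (u:V) ∈ g →
        ∃ t, t ∈ g ∧ t ≠ v ∧ t ≠ ↑u ∧ g = {v, ↑u, t} := by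
      intro g hg hvg hug
      have h3 := hT.1 g hg
      have hvu : v ≠ ↑u := hadjvu.ne
      have hsub : ({v, ↑u} : Finset V) ⊆ g := by
        intro z hz
        rcases Finset.mem_insert.1 hz with rfl | hz
        · exact hvg
        · rw [Finset.mem_singleton.1 hz]; exact hug
      have hsd : (g \ ({v, ↑u} : Finset V)).card = 1 := by
        rw [Finset.card_sdiff_of_subset hsub, h3, Finset.card_pair hvu]
      obtain ⟨t, ht⟩ := Finset.card_eq_one.1 hsd
      have htg : t ∈ g \ ({v, ↑u} : Finset V) := by
        rw [ht]; exact Finset.mem_singleton_self t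
      have htnv : t ≠ v := fun h => (Finset.mem_sdiff.1 htg).2 (by simp [h])
      have htnu : t ≠ ↑u := fun h => (Finset.mem_sdiff.1 htg).2 (by simp [h])
      refine ⟨t, (Finset.mem_sdiff.1 htg).1, htnv, htnu, ?_⟩
      apply Finset.Subset.antisymm
      · intro z hz
        by_cases hzv : z = v
        · simp [hzv]
        by_cases hzu : z = ↑u
        · simp [hzu]
        have hzm : z ∈ g \ ({v, ↑u} : Finset V) :=
          Finset.mem_sdiff.2 ⟨hz, by simp [hzv, hzu]⟩
        rw [ht] at hzm
        simp only [Finset.mem_singleton] at hzm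
        simp [hzm]
      · intro z hz
        simp only [Finset.mem_insert, Finset.mem_singleton] at hz
        rcases hz with rfl | rfl | rfl
        · exact hvg
        · exact hug
        · exact (Finset.mem_sdiff.1 htg).1
    obtain ⟨t1, ht1g, ht1v, ht1u, hg1eq⟩ := hthird g1 hg1 hg1v hg1u
    obtain ⟨t2, ht2g, ht2v, ht2u, hg2eq⟩ := hthird g2 hg2 hg2v hg2u
    have ht12 : t1 ≠ t2 := by
      intro h
      apply hg12
      rw [hg1eq, hg2eq, h]
    have himage : (Subtype.val '' ((T.G.induce (T.G.neighborSet v)).neighborSet u))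
        = {t1, t2} := by
      ext w
      simp only [Set.mem_image, SimpleGraph.mem_neighborSet, Set.mem_insert_iff,
        Set.mem_singleton_iff]
      constructor
      · rintro ⟨⟨w', hw'⟩, hadj, rfl⟩
        have hadj' : T.G.Adj ↑u w' := hadj
        have hwv : T.G.Adj v w' := hw'
        have hface : ({v, ↑u, w'} : Finset V) ∈ T.faces :=
          triangle_is_face T h4 hadjvu hadj' hwv
        have hmemfil : ({v, ↑u, w'} : Finset V) ∈
            T.faces.filter (fun f => v ∈ f ∧ (u:V) ∈ f) := by
          refine Finset.mem_filter.2 ⟨hface, by simp, by simp⟩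
        rw [hfilpair] at hmemfil
        rcases Finset.mem_insert.1 hmemfil with hEq | hEq
        · left
          have hw'm : w' ∈ g1 := by rw [← hEq]; simp
          rw [hg1eq] at hw'm
          simp only [Finset.mem_insert, Finset.mem_singleton] at hw'm
          rcases hw'm with h | h | h
          · exact absurd h hwv.ne'
          · exact absurd h hadj'.ne'
          · exact h
        · right
          have hEq2 : ({v, ↑u, w'} : Finset V) = g2 := Finset.mem_singleton.1 hEq
          have hw'm : w' ∈ g2 := by rw [← hEq2]; simp
          rw [hg2eq] at hw'm
          simp only [Finset.mem_insert, Finset.mem_singleton] at hw'm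
          rcases hw'm with h | h | h
          · exact absurd h hwv.ne'
          · exact absurd h hadj'.ne'
          · exact h
      · rintro (h | h)
        · have hadjv : T.G.Adj v w := by
            rw [h]; exact T.face_clique g1 hg1 v hg1v t1 ht1g (Ne.symm ht1v)
          have hadju : T.G.Adj ↑u w := by
            rw [h]; exact T.face_clique g1 hg1 ↑u hg1u t1 ht1g (Ne.symm ht1u)
          exact ⟨⟨w, hadjv⟩, hadju, rfl⟩
        · have hadjv : T.G.Adj v w := by
            rw [h]; exact T.face_clique g2 hg2 v hg2v t2 ht2g (Ne.symm ht2v)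
          have hadju : T.G.Adj ↑u w := by
            rw [h]; exact T.face_clique g2 hg2 ↑u hg2u t2 ht2g (Ne.symm ht2u)
          exact ⟨⟨w, hadjv⟩, hadju, rfl⟩
    have hinj : Set.InjOn (Subtype.val)
        ((T.G.induce (T.G.neighborSet v)).neighborSet u) :=
      Subtype.val_injective.injOn
    have hkey := Set.ncard_image_of_injOn hinj
    rw [himage] at hkey
    rw [← hkey]
    exact Set.ncard_pair ht12
end

section
/- If G belongs to E(4) with colour classes B, W, R, then |B ∪ W| > |G|/2, i.e., the number of black and white vertices together exceeds half the total number of vertices. -/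
open Finset

/-- Counting helper: card as a sum over the whole type. -/
private lemma card_as_sum {V : Type*} [Fintype V] [DecidableEq V] (s : Finset V) :
    s.card = ∑ u : V, if u ∈ s then 1 else 0 := by
  rw [Finset.sum_ite_mem, Finset.univ_inter, Finset.sum_const, smul_eq_mul, mul_one]

/-- In a plane triangulation, the number of faces containing `v` is `deg v`. -/
private lemma faces_at_vertex {V : Type*} [Fintype V] [DecidableEq V]
    (T : PlaneTriangulation V) (v : V) :
    (T.faces.filter (fun f => v ∈ f)).card = T.deg v := by
  classical
  have hdeg : T.deg v = (Finset.univ.filter (fun u => T.G.Adj v u)).card := by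
    rw [PlaneTriangulation.deg, Set.ncard_eq_toFinset_card']
    congr 1
    ext u
    simp [SimpleGraph.mem_neighborSet]
  have key : 2 * (T.faces.filter (fun f => v ∈ f)).card = 2 * T.deg v := by
    calc 2 * (T.faces.filter (fun f => v ∈ f)).card
        = ∑ f ∈ T.faces.filter (fun f => v ∈ f), (f.erase v).card := by
          rw [Finset.sum_congr rfl (g := fun _ => 2) (fun f hf => ?_), Finset.sum_const,
            smul_eq_mul, mul_comm]
          rw [Finset.mem_filter] at hf
          rw [Finset.card_erase_of_mem hf.2, T.face_card f hf.1]
      _ = ∑ f ∈ T.faces.filter (fun f => v ∈ f), ∑ u : V, if u ∈ f.erase v then 1 else 0 := by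
          exact Finset.sum_congr rfl fun f _ => card_as_sum _
      _ = ∑ u : V, ∑ f ∈ T.faces.filter (fun f => v ∈ f), if u ∈ f.erase v then 1 else 0 :=
          Finset.sum_comm
      _ = ∑ u : V, ((T.faces.filter (fun f => v ∈ f)).filter (fun f => u ∈ f.erase v)).card := by
          exact Finset.sum_congr rfl fun u _ => (Finset.card_filter _ _).symm
      _ = ∑ u : V, if T.G.Adj v u then 2 else 0 := by
          refine Finset.sum_congr rfl fun u _ => ?_
          rw [Finset.filter_filter]
          by_cases hadj : T.G.Adj v u
          · have hne : u ≠ v := (T.G.ne_of_adj hadj).symm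
            rw [if_pos hadj]
            have : T.faces.filter (fun f => v ∈ f ∧ u ∈ f.erase v)
                = T.faces.filter (fun f => v ∈ f ∧ u ∈ f) :=
              Finset.filter_congr (fun f _ => by simp [Finset.mem_erase, hne])
            rw [this]
            exact T.edge_two_faces v u hadj
          · rw [if_neg hadj]
            rw [Finset.card_eq_zero, Finset.filter_eq_empty_iff]
            intro f hf
            rintro ⟨hv, hu⟩
            rw [Finset.mem_erase] at hu
            exact hadj (T.face_clique f hf v hv u hu.2 (Ne.symm hu.1))
      _ = 2 * T.deg v := by
          rw [← Finset.sum_filter, Finset.sum_const, smul_eq_mul, mul_comm, hdeg]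
  omega

/-- If `G ∈ E(4)` with colour classes `B, W, R`, then `|B ∪ W| > |G| / 2`. -/
theorem stmt5 {V : Type*} [Fintype V] [DecidableEq V] (T : PlaneTriangulation V)
    (B W R : Set V) (hE4 : T.IsE4Coloring B W R) :
    2 * (B ∪ W).ncard > Fintype.card V := by
  classical
  obtain ⟨hU, hBW, hBR, hWR, hBi, hWi, hRi, hR4⟩ := hE4
  set n := Fintype.card V with hn
  -- each face has exactly one red vertex
  have hone : ∀ f ∈ T.faces, (f.filter (· ∈ R)).card = 1 := by
    intro f hf
    have indep : ∀ (S : Set V), (∀ a ∈ S, ∀ b ∈ S, ¬ T.G.Adj a b) →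
        (f.filter (· ∈ S)).card ≤ 1 := by
      intro S hS
      refine Finset.card_le_one.mpr fun a ha b hb => ?_
      rw [Finset.mem_filter] at ha hb
      by_contra hab
      exact hS a ha.2 b hb.2 (T.face_clique f hf a ha.1 b hb.1 hab)
    have hsum : (f.filter (· ∈ B)).card + (f.filter (· ∈ W)).card
        + (f.filter (· ∈ R)).card = 3 := by
      rw [Finset.card_filter, Finset.card_filter, Finset.card_filter,
        ← Finset.sum_add_distrib, ← Finset.sum_add_distrib]
      rw [show (3 : ℕ) = f.card from (T.face_card f hf).symm, Finset.card_eq_sum_ones]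
      refine Finset.sum_congr rfl fun u _ => ?_
      have hu : u ∈ B ∪ W ∪ R := by rw [hU]; trivial
      by_cases hb : u ∈ B
      · have hw : u ∉ W := fun h => Set.disjoint_left.mp hBW hb h
        have hr : u ∉ R := fun h => Set.disjoint_left.mp hBR hb h
        simp [hb, hw, hr]
      · by_cases hw : u ∈ W
        · have hr : u ∉ R := fun h => Set.disjoint_left.mp hWR hw h
          simp [hb, hw, hr]
        · have hr : u ∈ R := by
            rcases hu with (hb' | hw') | hr'
            · exact absurd hb' hb
            · exact absurd hw' hw
            · exact hr'
          simp [hb, hw, hr]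
    have h1 := indep B hBi
    have h2 := indep W hWi
    have h3 := indep R hRi
    omega
  set Rf : Finset V := Finset.univ.filter (· ∈ R) with hRf
  have hRcard : Rf.card = R.ncard := by
    rw [Set.ncard_eq_toFinset_card']
    congr 1
    ext u
    simp [hRf]
  -- total number of faces is 4 * |R|
  have hfaces : T.faces.card = 4 * R.ncard := by
    calc T.faces.card = ∑ f ∈ T.faces, (f.filter (· ∈ R)).card := by
          rw [Finset.card_eq_sum_ones]
          exact Finset.sum_congr rfl fun f hf => (hone f hf).symm
      _ = ∑ f ∈ T.faces, ∑ u : V, if u ∈ f.filter (· ∈ R) then 1 else 0 :=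
          Finset.sum_congr rfl fun f _ => card_as_sum _
      _ = ∑ u : V, ∑ f ∈ T.faces, if u ∈ f.filter (· ∈ R) then 1 else 0 := Finset.sum_comm
      _ = ∑ u ∈ Rf, ∑ f ∈ T.faces, if u ∈ f then 1 else 0 := by
          rw [hRf, Finset.sum_filter]
          refine Finset.sum_congr rfl fun u _ => ?_
          by_cases hr : u ∈ R <;> simp [hr, Finset.mem_filter]
      _ = ∑ u ∈ Rf, (T.faces.filter (fun f => u ∈ f)).card :=
          Finset.sum_congr rfl fun u _ => (Finset.card_filter _ _).symm
      _ = ∑ u ∈ Rf, 4 := by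
          refine Finset.sum_congr rfl fun u hu => ?_
          rw [hRf, Finset.mem_filter] at hu
          rw [faces_at_vertex, hR4 u hu.2]
      _ = 4 * R.ncard := by rw [Finset.sum_const, smul_eq_mul, mul_comm, hRcard]
  -- handshake: 3 F = 2 E
  have hhand : 3 * T.faces.card = 2 * T.G.edgeSet.ncard := by
    have hdeg : ∀ u, T.deg u = T.G.degree u := by
      intro u
      rw [PlaneTriangulation.deg, Set.ncard_eq_toFinset_card']
      congr 1
    calc 3 * T.faces.card = ∑ f ∈ T.faces, f.card := by
          rw [Finset.sum_congr rfl (g := fun f => 3) (fun f hf => T.face_card f hf),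
            Finset.sum_const, smul_eq_mul, mul_comm]
      _ = ∑ f ∈ T.faces, ∑ u : V, if u ∈ f then 1 else 0 :=
          Finset.sum_congr rfl fun f _ => card_as_sum _
      _ = ∑ u : V, ∑ f ∈ T.faces, if u ∈ f then 1 else 0 := Finset.sum_comm
      _ = ∑ u : V, (T.faces.filter (fun f => u ∈ f)).card :=
          Finset.sum_congr rfl fun u _ => (Finset.card_filter _ _).symm
      _ = ∑ u : V, T.G.degree u := Finset.sum_congr rfl fun u _ => by
          rw [faces_at_vertex, hdeg]
      _ = 2 * T.G.edgeFinset.card := T.G.sum_degrees_eq_twice_card_edges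
      _ = 2 * T.G.edgeSet.ncard := by rw [Set.ncard_eq_toFinset_card']; congr 1
  -- Euler gives n = 2 |R| + 2
  have heuler := T.euler
  have hnR : n = 2 * R.ncard + 2 := by
    have h1 : (n : ℤ) - (T.G.edgeSet.ncard : ℤ) + (T.faces.card : ℤ) = 2 := heuler
    have h2 : (3 : ℤ) * T.faces.card = 2 * T.G.edgeSet.ncard := by exact_mod_cast hhand
    have h3 : (T.faces.card : ℤ) = 4 * R.ncard := by exact_mod_cast hfaces
    have : (n : ℤ) = 2 * R.ncard + 2 := by linarith
    exact_mod_cast this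
  -- B ∪ W = Rᶜ
  have hcomp : B ∪ W = Rᶜ := by
    ext x
    simp only [Set.mem_compl_iff, Set.mem_union]
    constructor
    · rintro (hb | hw) hr
      · exact Set.disjoint_left.mp hBR hb hr
      · exact Set.disjoint_left.mp hWR hw hr
    · intro hr
      have hx : x ∈ B ∪ W ∪ R := by rw [hU]; trivial
      rcases hx with (hb | hw) | hr'
      · exact Or.inl hb
      · exact Or.inr hw
      · exact absurd hr' hr
  have hsplit : R.ncard + (B ∪ W).ncard = n := by
    rw [hcomp]
    have h := Set.ncard_add_ncard_compl R
    rw [Nat.card_eq_fintype_card] at h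
    exact h
  omega
end
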